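/- arXiv:1411.1178 — 5 statements merged into one kernel-verified Lean document; each statement's English description precedes it below -/
import Mathlib

section
/- Vanishing of the transport term against powers of the solution: let q ∈ [2,∞), let θ : ℝ² → ℝ be smooth with compact support, and let ψ : ℝ² → ℝ be twice continuously differentiable. Then ∫_{ℝ²} ( ∂₁θ(x)·∂₂ψ(x) − ∂₂θ(x)·∂₁ψ(x) ) |θ(x)|^{q−1} sgn(θ(x)) dx = 0. -/
open MeasureTheory Real Set

local notation "E2" => EuclideanSpace ℝ (Fin 2)

lemma abs_rpow_mul_self_eq (q : ℝ) (hq : 2 ≤ q) (t : ℝ) :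
    |t| ^ (q - 2) * t = |t| ^ (q - 1) * Real.sign t := by
  rcases lt_trichotomy t 0 with ht | rfl | ht
  · have habs : (0:ℝ) < |t| := abs_pos.2 ht.ne
    rw [Real.sign_of_neg ht]
    have : |t| ^ (q - 1) = |t| ^ (q - 2) * |t| := by
      rw [← Real.rpow_add_one habs.ne' (q - 2)]; ring_nf
    rw [this, abs_of_neg ht]; ring
  · simp [Real.sign_zero, Real.zero_rpow (by linarith : q - 1 ≠ 0)]
  · have habs : (0:ℝ) < |t| := abs_pos.2 ht.ne'
    rw [Real.sign_of_pos ht]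
    have : |t| ^ (q - 1) = |t| ^ (q - 2) * |t| := by
      rw [← Real.rpow_add_one habs.ne' (q - 2)]; ring_nf
    rw [this, abs_of_pos ht]; ring

/-- **Vanishing of the transport term against powers of the solution.**
For `q ∈ [2,∞)`, `θ : ℝ² → ℝ` smooth with compact support and `ψ : ℝ² → ℝ` of class `C²`,
`∫ (∂₁θ·∂₂ψ - ∂₂θ·∂₁ψ) |θ|^{q-1} sgn(θ) = 0`. -/
theorem transport_term_vanishes
    (q : ℝ) (hq : 2 ≤ q)
    (θ ψ : EuclideanSpace ℝ (Fin 2) → ℝ)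
    (hθ : ContDiff ℝ (⊤ : ℕ∞) θ) (hθsupp : HasCompactSupport θ)
    (hψ : ContDiff ℝ 2 ψ) :
    ∫ x : EuclideanSpace ℝ (Fin 2),
      (fderiv ℝ θ x (EuclideanSpace.single 0 1) * fderiv ℝ ψ x (EuclideanSpace.single 1 1)
        - fderiv ℝ θ x (EuclideanSpace.single 1 1) * fderiv ℝ ψ x (EuclideanSpace.single 0 1))
        * |θ x| ^ (q - 1) * Real.sign (θ x) = 0 := by
  have hq1 : (1:ℝ) < q := by linarith
  have hqne : q ≠ 0 := by positivity
  set e₁ : E2 := EuclideanSpace.single 0 1 with he₁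
  set e₂ : E2 := EuclideanSpace.single 1 1 with he₂
  set G : E2 → ℝ := fun x => |θ x| ^ q with hGdef
  have hθd : Differentiable ℝ θ := hθ.differentiable (by simp)
  have hθc : Continuous θ := hθd.continuous
  have hGc1 : ContDiff ℝ 1 G := by
    have := (hθ.of_le (by exact_mod_cast le_top)).norm_rpow hq1
    simpa [Real.norm_eq_abs] using this
  have hGd : Differentiable ℝ G := hGc1.differentiable one_ne_zero
  have hGfd : ∀ x : E2, HasFDerivAt G ((q * |θ x| ^ (q - 2) * θ x) • fderiv ℝ θ x) x := by
    intro x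
    exact (hasDerivAt_abs_rpow (θ x) hq1).comp_hasFDerivAt x (hθd x).hasFDerivAt
  have hGfd' : ∀ (x : E2) (v : E2),
      fderiv ℝ G x v = (q * |θ x| ^ (q - 2) * θ x) * fderiv ℝ θ x v := by
    intro x v
    rw [(hGfd x).fderiv]
    simp [smul_eq_mul]
  -- G and its derivative vanish outside tsupport θ
  have hGzero : ∀ x : E2, θ x = 0 → G x = 0 := by
    intro x hx
    simp [hGdef, hx, Real.zero_rpow hqne]
  have hGfzero : ∀ (x : E2) (v : E2), θ x = 0 → fderiv ℝ G x v = 0 := by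
    intro x v hx
    rw [hGfd' x v, hx]
    ring
  -- continuity of fderiv G applied to a vector
  have hGfc : ∀ v : E2, Continuous fun x => fderiv ℝ G x v := fun v =>
    (hGc1.continuous_fderiv one_ne_zero).clm_apply continuous_const
  -- the first derivative of ψ
  have hψ1 : ContDiff ℝ 1 (fderiv ℝ ψ) := hψ.fderiv_right le_rfl
  have hψw : ∀ w : E2, ContDiff ℝ 1 (fun x => fderiv ℝ ψ x w) := by
    intro w
    exact (ContinuousLinearMap.apply ℝ ℝ w).contDiff.comp hψ1
  have hψwc : ∀ w : E2, Continuous fun x => fderiv ℝ ψ x w := fun w =>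
    (hψw w).continuous
  have hψwd : ∀ w : E2, Differentiable ℝ (fun x => fderiv ℝ ψ x w) := fun w =>
    (hψw w).differentiable one_ne_zero
  -- second derivative
  set H : E2 → E2 →L[ℝ] E2 →L[ℝ] ℝ := fderiv ℝ (fderiv ℝ ψ) with hHdef
  have hHc : Continuous H := hψ1.continuous_fderiv one_ne_zero
  have hψwf : ∀ (w x v : E2), fderiv ℝ (fun y => fderiv ℝ ψ y w) x v = H x v w := by
    intro w x v
    have h1 : HasFDerivAt (fun y => fderiv ℝ ψ y w)
        ((ContinuousLinearMap.apply ℝ ℝ w).comp (H x)) x :=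
      ((ContinuousLinearMap.apply ℝ ℝ w).hasFDerivAt).comp x
        ((hψ1.differentiable one_ne_zero x).hasFDerivAt)
    rw [h1.fderiv]
    rfl
  have hsymm : ∀ x : E2, H x e₁ e₂ = H x e₂ e₁ := by
    intro x
    exact (hψ.contDiffAt.isSymmSndFDerivAt (by simp)) e₁ e₂
  -- integrability of everything
  have hint : ∀ f : E2 → ℝ, Continuous f → (∀ x, θ x = 0 → f x = 0) →
      Integrable f volume := by
    intro f hfc hf0
    apply hfc.integrable_of_hasCompactSupport
    apply HasCompactSupport.intro hθsupp
    intro x hx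
    exact hf0 x (image_eq_zero_of_notMem_tsupport hx)
  have hGcont : Continuous G := hGc1.continuous
  -- integration by parts in direction v against ∂ψ/∂w
  have IBP : ∀ v w : E2,
      ∫ x, G x * H x v w = - ∫ x, fderiv ℝ G x v * fderiv ℝ ψ x w := by
    intro v w
    have heq : (fun x => G x * fderiv ℝ (fun y => fderiv ℝ ψ y w) x v)
        = fun x => G x * H x v w := by
      funext x; rw [hψwf]
    have hHvw : Continuous fun x => H x v w :=
      (hHc.clm_apply continuous_const).clm_apply continuous_const
    have hint2 : Integrable (fun x => G x * fderiv ℝ (fun y => fderiv ℝ ψ y w) x v) volume := by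
      rw [heq]
      exact hint _ (hGcont.mul hHvw) (fun x hx => by rw [hGzero x hx]; ring)
    have h := integral_mul_fderiv_eq_neg_fderiv_mul_of_integrable
      (μ := (volume : Measure E2)) (f := G) (g := fun x => fderiv ℝ ψ x w) (v := v)
      (hint _ ((hGfc v).mul (hψwc w)) (fun x hx => by rw [hGfzero x v hx]; ring))
      hint2
      (hint _ (hGcont.mul (hψwc w)) (fun x hx => by rw [hGzero x hx]; ring))
      (fun x _ => hGd x) (fun x _ => hψwd w x)
    rw [heq] at h
    exact h
  -- combine
  have hAB : (∫ x, fderiv ℝ G x e₁ * fderiv ℝ ψ x e₂)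
      = ∫ x, fderiv ℝ G x e₂ * fderiv ℝ ψ x e₁ := by
    have h1 := IBP e₁ e₂
    have h2 := IBP e₂ e₁
    have h3 : (fun x => G x * H x e₁ e₂) = fun x => G x * H x e₂ e₁ := by
      funext x; rw [hsymm]
    rw [h3, h2] at h1
    exact (neg_inj.1 h1).symm
  have hTeq : (fun x : E2 => (fderiv ℝ θ x e₁ * fderiv ℝ ψ x e₂
        - fderiv ℝ θ x e₂ * fderiv ℝ ψ x e₁) * |θ x| ^ (q - 1) * Real.sign (θ x))
      = fun x => q⁻¹ * (fderiv ℝ G x e₁ * fderiv ℝ ψ x e₂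
        - fderiv ℝ G x e₂ * fderiv ℝ ψ x e₁) := by
    funext x
    rw [hGfd' x e₁, hGfd' x e₂]
    have hs := abs_rpow_mul_self_eq q hq (θ x)
    field_simp
    linear_combination (- 1 * (fderiv ℝ θ x e₁ * fderiv ℝ ψ x e₂
      - fderiv ℝ θ x e₂ * fderiv ℝ ψ x e₁)) * hs
  rw [hTeq, MeasureTheory.integral_const_mul q⁻¹ _,
    integral_sub (hint (fun x => fderiv ℝ G x e₁ * fderiv ℝ ψ x e₂) ((hGfc e₁).mul (hψwc e₂))
        (fun x hx => by rw [hGfzero x e₁ hx]; ring))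
      (hint (fun x => fderiv ℝ G x e₂ * fderiv ℝ ψ x e₁) ((hGfc e₂).mul (hψwc e₁))
        (fun x hx => by rw [hGfzero x e₂ hx]; ring)),
    hAB, sub_self, mul_zero]
end

section
/- Passage from the L^q maximum principle to an L^∞ bound: let (Ω, μ) be a measure space, let θ, θ₀, f : Ω → ℝ be measurable, and let t ≥ 0. Assume θ₀ and f belong to L^q(μ) for every q ∈ [2,∞) and to L^∞(μ), and that for every q ∈ [2,∞): ∫_Ω |θ|^q dμ ≤ e^{(q−1)t} ∫_Ω |θ₀|^q dμ + ((e^{(q−1)t} − 1)/(q−1)) ∫_Ω |f|^q dμ. Then θ ∈ L^∞(μ) and ‖θ‖_{L^∞(μ)} ≤ ( ‖θ₀‖_{L^∞(μ)} + ‖f‖_{L^∞(μ)} ) e^t. -/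
open MeasureTheory Real Filter
open scoped ENNReal Topology

/-- **Passage from the `L^q` maximum principle to an `L^∞` bound.**
If `θ₀, f ∈ L^q(μ)` for all `q ∈ [2,∞)` and `θ₀, f ∈ L^∞(μ)`, and the family of `L^q`
bounds `∫|θ|^q ≤ e^{(q-1)t}∫|θ₀|^q + ((e^{(q-1)t}-1)/(q-1))∫|f|^q` holds for every
`q ∈ [2,∞)`, then `θ ∈ L^∞(μ)` with `‖θ‖_∞ ≤ (‖θ₀‖_∞ + ‖f‖_∞) e^t`. -/
theorem Linfty_bound_from_Lq_maximum_principle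
    {Ω : Type*} [MeasurableSpace Ω] (μ : Measure Ω)
    (θ θ₀ f : Ω → ℝ)
    (hθ : Measurable θ) (hθ₀ : Measurable θ₀) (hf : Measurable f)
    (t : ℝ) (ht : 0 ≤ t)
    (hθ₀q : ∀ q : ℝ, 2 ≤ q → MemLp θ₀ (ENNReal.ofReal q) μ)
    (hθ₀top : MemLp θ₀ ⊤ μ)
    (hfq : ∀ q : ℝ, 2 ≤ q → MemLp f (ENNReal.ofReal q) μ)
    (hftop : MemLp f ⊤ μ)
    (hbound : ∀ q : ℝ, 2 ≤ q →
      ∫⁻ x, ENNReal.ofReal (|θ x| ^ q) ∂μ ≤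
        ENNReal.ofReal (Real.exp ((q - 1) * t)) * ∫⁻ x, ENNReal.ofReal (|θ₀ x| ^ q) ∂μ
          + ENNReal.ofReal ((Real.exp ((q - 1) * t) - 1) / (q - 1)) *
              ∫⁻ x, ENNReal.ofReal (|f x| ^ q) ∂μ) :
    MemLp θ ⊤ μ ∧
      eLpNorm θ ⊤ μ ≤ (eLpNorm θ₀ ⊤ μ + eLpNorm f ⊤ μ) * ENNReal.ofReal (Real.exp t) := by
  set A : ℝ := (eLpNorm θ₀ ⊤ μ).toReal with hAdef
  set B : ℝ := (eLpNorm f ⊤ μ).toReal with hBdef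
  have hθ₀fin : eLpNorm θ₀ ⊤ μ ≠ ⊤ := hθ₀top.eLpNorm_ne_top
  have hffin : eLpNorm f ⊤ μ ≠ ⊤ := hftop.eLpNorm_ne_top
  have hA0 : 0 ≤ A := ENNReal.toReal_nonneg
  have hB0 : 0 ≤ B := ENNReal.toReal_nonneg
  -- a.e. pointwise bounds
  have hθ₀ae : ∀ᵐ x ∂μ, |θ₀ x| ≤ A := by
    filter_upwards [ae_le_eLpNormEssSup (f := θ₀) (μ := μ)] with x hx
    have h := ENNReal.toReal_mono (by rwa [eLpNorm_exponent_top] at hθ₀fin) hx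
    simpa [hAdef, eLpNorm_exponent_top] using h
  have hfae : ∀ᵐ x ∂μ, |f x| ≤ B := by
    filter_upwards [ae_le_eLpNormEssSup (f := f) (μ := μ)] with x hx
    have h := ENNReal.toReal_mono (by rwa [eLpNorm_exponent_top] at hffin) hx
    simpa [hBdef, eLpNorm_exponent_top] using h
  -- the squared integrals are finite
  have two_eq : (ENNReal.ofReal (2:ℝ)) = (2 : ℝ≥0∞) := by
    norm_num
  have hI0 : ∫⁻ x, ENNReal.ofReal (|θ₀ x| ^ (2:ℝ)) ∂μ ≠ ⊤ := by
    have h2 : MemLp θ₀ (2 : ℝ≥0∞) μ := by rw [← two_eq]; exact hθ₀q 2 le_rfl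
    have hint := h2.integrable_norm_rpow (by norm_num) (by norm_num)
    have hfin := hint.hasFiniteIntegral
    rw [hasFiniteIntegral_iff_norm] at hfin
    refine ne_of_lt (lt_of_le_of_lt (le_of_eq ?_) hfin)
    refine lintegral_congr fun x => ?_
    congr 1
    rw [Real.norm_eq_abs, Real.norm_eq_abs, ENNReal.toReal_ofNat,
      abs_of_nonneg (Real.rpow_nonneg (abs_nonneg _) _)]
  have hIf0 : ∫⁻ x, ENNReal.ofReal (|f x| ^ (2:ℝ)) ∂μ ≠ ⊤ := by
    have h2 : MemLp f (2 : ℝ≥0∞) μ := by rw [← two_eq]; exact hfq 2 le_rfl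
    have hint := h2.integrable_norm_rpow (by norm_num) (by norm_num)
    have hfin := hint.hasFiniteIntegral
    rw [hasFiniteIntegral_iff_norm] at hfin
    refine ne_of_lt (lt_of_le_of_lt (le_of_eq ?_) hfin)
    refine lintegral_congr fun x => ?_
    congr 1
    rw [Real.norm_eq_abs, Real.norm_eq_abs, ENNReal.toReal_ofNat,
      abs_of_nonneg (Real.rpow_nonneg (abs_nonneg _) _)]
  set K : ℝ≥0∞ := (∫⁻ x, ENNReal.ofReal (|θ₀ x| ^ (2:ℝ)) ∂μ)
      + ∫⁻ x, ENNReal.ofReal (|f x| ^ (2:ℝ)) ∂μ with hKdef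
  have hKfin : K ≠ ⊤ := by
    rw [hKdef]; exact ENNReal.add_ne_top.2 ⟨hI0, hIf0⟩
  -- key per-q estimate
  have key : ∀ q : ℝ, 2 ≤ q →
      ∫⁻ x, ENNReal.ofReal (|θ x| ^ q) ∂μ ≤
        ENNReal.ofReal (Real.exp (q * t) * (A + B) ^ (q - 2)) * K := by
    intro q hq
    have hq2 : (0:ℝ) ≤ q - 2 := by linarith
    have pointwise : ∀ (g : Ω → ℝ) (C : ℝ), 0 ≤ C → (∀ᵐ x ∂μ, |g x| ≤ C) →
        ∫⁻ x, ENNReal.ofReal (|g x| ^ q) ∂μ ≤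
          ENNReal.ofReal (C ^ (q - 2)) * ∫⁻ x, ENNReal.ofReal (|g x| ^ (2:ℝ)) ∂μ := by
      intro g C hC hgC
      rw [← lintegral_const_mul' _ _ ENNReal.ofReal_ne_top]
      refine lintegral_mono_ae ?_
      filter_upwards [hgC] with x hx
      rw [← ENNReal.ofReal_mul (Real.rpow_nonneg hC _)]
      refine ENNReal.ofReal_le_ofReal ?_
      calc |g x| ^ q = |g x| ^ (q - 2) * |g x| ^ (2:ℝ) := by
            rw [← Real.rpow_add_of_nonneg (abs_nonneg _) hq2 (by norm_num)]
            ring_nf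
        _ ≤ C ^ (q - 2) * |g x| ^ (2:ℝ) := by
            have := Real.rpow_le_rpow (abs_nonneg _) hx hq2
            exact mul_le_mul_of_nonneg_right this (Real.rpow_nonneg (abs_nonneg _) _)
    have h1 := pointwise θ₀ A hA0 hθ₀ae
    have h2 := pointwise f B hB0 hfae
    -- coefficient bounds
    have hst : (0:ℝ) ≤ (q - 1) * t := mul_nonneg (by linarith) ht
    have hc1 : Real.exp ((q - 1) * t) ≤ Real.exp (q * t) :=
      Real.exp_le_exp.2 (by nlinarith)
    have hc2 : (Real.exp ((q - 1) * t) - 1) / (q - 1) ≤ Real.exp (q * t) := by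
      have h1' : (Real.exp ((q - 1) * t) - 1) / (q - 1) ≤ Real.exp ((q - 1) * t) - 1 := by
        apply div_le_self (by linarith [Real.one_le_exp hst]) (by linarith)
      linarith
    have hAB1 : A ^ (q - 2) ≤ (A + B) ^ (q - 2) :=
      Real.rpow_le_rpow hA0 (by linarith) hq2
    have hAB2 : B ^ (q - 2) ≤ (A + B) ^ (q - 2) :=
      Real.rpow_le_rpow hB0 (by linarith) hq2
    calc ∫⁻ x, ENNReal.ofReal (|θ x| ^ q) ∂μ
        ≤ ENNReal.ofReal (Real.exp ((q - 1) * t)) * ∫⁻ x, ENNReal.ofReal (|θ₀ x| ^ q) ∂μ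
          + ENNReal.ofReal ((Real.exp ((q - 1) * t) - 1) / (q - 1)) *
              ∫⁻ x, ENNReal.ofReal (|f x| ^ q) ∂μ := hbound q hq
      _ ≤ ENNReal.ofReal (Real.exp (q * t)) *
            (ENNReal.ofReal ((A + B) ^ (q - 2)) * ∫⁻ x, ENNReal.ofReal (|θ₀ x| ^ (2:ℝ)) ∂μ)
          + ENNReal.ofReal (Real.exp (q * t)) *
            (ENNReal.ofReal ((A + B) ^ (q - 2)) * ∫⁻ x, ENNReal.ofReal (|f x| ^ (2:ℝ)) ∂μ) := by
          gcongr
          · exact le_trans h1 (mul_le_mul_left (ENNReal.ofReal_le_ofReal hAB1) _)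
          · exact le_trans h2 (mul_le_mul_left (ENNReal.ofReal_le_ofReal hAB2) _)
      _ = ENNReal.ofReal (Real.exp (q * t) * (A + B) ^ (q - 2)) * K := by
          rw [ENNReal.ofReal_mul (Real.exp_nonneg _), hKdef]
          ring
  -- the main a.e. bound
  set M : ℝ := (A + B) * Real.exp t with hMdef
  have hM0 : 0 ≤ M := mul_nonneg (by linarith) (Real.exp_nonneg t)
  have hnull : ∀ c : ℝ, M < c → μ {x | c ≤ |θ x|} = 0 := by
    intro c hc
    have hc0 : 0 < c := lt_of_le_of_lt hM0 hc
    set S := {x | c ≤ |θ x|} with hSdef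
    have cheb : ∀ n : ℕ, 2 ≤ n →
        ENNReal.ofReal (c ^ n) * μ S ≤
          ENNReal.ofReal (Real.exp (n * t) * (A + B) ^ ((n:ℝ) - 2)) * K := by
      intro n hn
      have h2n : (2:ℝ) ≤ (n:ℝ) := by exact_mod_cast hn
      refine le_trans ?_ (key n h2n)
      have hmeas : AEMeasurable (fun x => ENNReal.ofReal (|θ x| ^ (n:ℝ))) μ :=
        ((hθ.abs.pow_const (n:ℝ)).ennreal_ofReal).aemeasurable
      have hsub : S ⊆ {x | ENNReal.ofReal (c ^ n) ≤ ENNReal.ofReal (|θ x| ^ (n:ℝ))} := by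
        intro x hx
        simp only [Set.mem_setOf_eq] at hx ⊢
        refine ENNReal.ofReal_le_ofReal ?_
        rw [Real.rpow_natCast]
        exact pow_le_pow_left₀ hc0.le hx n
      calc ENNReal.ofReal (c ^ n) * μ S
          ≤ ENNReal.ofReal (c ^ n) *
            μ {x | ENNReal.ofReal (c ^ n) ≤ ENNReal.ofReal (|θ x| ^ (n:ℝ))} := by
            exact mul_le_mul_right (measure_mono hsub) _
        _ ≤ ∫⁻ x, ENNReal.ofReal (|θ x| ^ (n:ℝ)) ∂μ :=
            mul_meas_ge_le_lintegral₀ hmeas _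
    by_cases hAB : A + B = 0
    · have h3 := cheb 3 (by norm_num)
      have hz : Real.exp ((3:ℕ) * t) * (A + B) ^ (((3:ℕ):ℝ) - 2) = 0 := by
        rw [hAB]
        norm_num [Real.zero_rpow]
      rw [hz] at h3
      simp only [ENNReal.ofReal_zero, zero_mul, nonpos_iff_eq_zero] at h3
      rcases mul_eq_zero.1 h3 with h | h
      · exact absurd h (by positivity)
      · exact h
    · have hABpos : 0 < A + B := lt_of_le_of_ne (by linarith) (Ne.symm hAB)
      set r : ℝ := M / c with hrdef
      have hr1 : r < 1 := (div_lt_one hc0).2 hc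
      have hr0 : 0 ≤ r := div_nonneg hM0 hc0.le
      have hkey2 : ∀ n : ℕ, 2 ≤ n → μ S ≤ ENNReal.ofReal (r ^ n / (A + B) ^ 2) * K := by
        intro n hn
        have hid : Real.exp (n * t) * (A + B) ^ ((n:ℝ) - 2)
            = c ^ n * (r ^ n / (A + B) ^ 2) := by
          rw [Real.rpow_sub hABpos, Real.rpow_natCast, hrdef, hMdef]
          rw [div_pow, mul_pow, ← Real.exp_nat_mul]
          have : (A + B) ^ (2:ℝ) = (A + B) ^ (2:ℕ) := by
            rw [← Real.rpow_natCast (A + B) 2]; norm_num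
          rw [this]
          field_simp
        have h := cheb n hn
        rw [hid, ENNReal.ofReal_mul (by positivity), mul_assoc] at h
        have hcn0 : ENNReal.ofReal (c ^ n) ≠ 0 := by
          simp [ENNReal.ofReal_eq_zero, not_le, pow_pos hc0]
        exact (ENNReal.mul_le_mul_iff_right hcn0 ENNReal.ofReal_ne_top).1 h
      have htend : Tendsto (fun n : ℕ => ENNReal.ofReal (r ^ n / (A + B) ^ 2) * K)
          atTop (𝓝 0) := by
        have h1 : Tendsto (fun n : ℕ => r ^ n / (A + B) ^ 2) atTop (𝓝 0) := by
          simpa using (tendsto_pow_atTop_nhds_zero_of_lt_one hr0 hr1).div_const ((A + B) ^ 2)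
        have h2 : Tendsto (fun n : ℕ => ENNReal.ofReal (r ^ n / (A + B) ^ 2))
            atTop (𝓝 0) := by
          simpa using (ENNReal.tendsto_ofReal h1)
        simpa using ENNReal.Tendsto.mul_const h2 (Or.inr hKfin)
      have hle : μ S ≤ 0 := by
        refine ge_of_tendsto htend ?_
        filter_upwards [eventually_ge_atTop 2] with n hn
        exact hkey2 n hn
      exact le_antisymm hle zero_le
  have hMae : ∀ᵐ x ∂μ, |θ x| ≤ M := by
    have hsub : {x | M < |θ x|} ⊆ ⋃ n : ℕ, {x | M + 1 / (n + 1) ≤ |θ x|} := by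
      intro x hx
      simp only [Set.mem_setOf_eq] at hx
      obtain ⟨n, hn⟩ := exists_nat_one_div_lt (sub_pos.2 hx)
      exact Set.mem_iUnion.2 ⟨n, by simp only [Set.mem_setOf_eq]; linarith⟩
    have hz : μ {x | M < |θ x|} = 0 := by
      refine measure_mono_null hsub (measure_iUnion_null fun n => hnull _ ?_)
      have : (0:ℝ) < 1 / (n + 1) := by positivity
      linarith
    rw [ae_iff]
    simpa [not_le] using hz
  have hbd : eLpNorm θ ⊤ μ ≤ ENNReal.ofReal M := by
    rw [eLpNorm_exponent_top]
    exact eLpNormEssSup_le_of_ae_bound (C := M) (by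
      filter_upwards [hMae] with x hx
      simpa [Real.norm_eq_abs] using hx)
  have hrhs : (eLpNorm θ₀ ⊤ μ + eLpNorm f ⊤ μ) * ENNReal.ofReal (Real.exp t)
      = ENNReal.ofReal M := by
    rw [hMdef, ENNReal.ofReal_mul (by linarith), ENNReal.ofReal_add hA0 hB0,
      hAdef, hBdef, ENNReal.ofReal_toReal hθ₀fin, ENNReal.ofReal_toReal hffin]
  constructor
  · exact ⟨hθ.aestronglyMeasurable, lt_of_le_of_lt hbd ENNReal.ofReal_lt_top⟩
  · rw [hrhs]; exact hbd
end

section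
/- Convergence of negative fractional powers (Lemma 6.1 of the paper): in the resolvent setting, for every ψ ∈ D, setting φ := Aψ, the Bochner integrals defining A^{−β}φ converge for every β ∈ (0,1), and ‖A^{−α}φ − A^{−1/2}φ‖_X → 0 as α → 1/2⁺. More precisely, for every ε > 0 there is δ > 0 such that α ∈ (1/2, 1/2 + δ) implies ‖A^{−α}φ − A^{−1/2}φ‖_X ≤ ε (‖φ‖_X + ‖ψ‖_X). -/
open MeasureTheory Real Set

lemma aux_intOn_Ioc {β : ℝ} (hβ : β < 1) :
    IntegrableOn (fun l : ℝ => l ^ (-β)) (Ioc (0:ℝ) 1) := by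
  have h := intervalIntegral.intervalIntegrable_rpow' (a := (0:ℝ)) (b := 1) (r := -β) (by linarith)
  rwa [intervalIntegrable_iff, uIoc_of_le zero_le_one] at h

lemma aux_int_Ioc {β : ℝ} (hβ : β < 1) :
    ∫ l in Ioc (0:ℝ) 1, l ^ (-β) = 1/(1-β) := by
  rw [← intervalIntegral.integral_of_le zero_le_one,
    integral_rpow (Or.inl (by linarith : (-1:ℝ) < -β))]
  rw [Real.one_rpow, Real.zero_rpow (by intro h; apply absurd h; intro h'; linarith)]
  ring

lemma aux_intOn_Ioi {β : ℝ} (hβ : 0 < β) :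
    IntegrableOn (fun l : ℝ => l ^ (-β-1)) (Ioi (1:ℝ)) :=
  integrableOn_Ioi_rpow_of_lt (by linarith) one_pos

lemma aux_int_Ioi {β : ℝ} (hβ : 0 < β) :
    ∫ l in Ioi (1:ℝ), l ^ (-β-1) = 1/β := by
  rw [integral_Ioi_rpow_of_lt (by linarith) one_pos, Real.one_rpow]
  field_simp
  rw [show -β - 1 + 1 = -β by ring, div_neg, neg_neg, div_self hβ.ne']

set_option maxHeartbeats 1000000 in
/-- **Convergence of negative fractional powers (Lemma 6.1).**
Resolvent setting: `X` Banach, `D ⊆ X` a linear subspace, `A` linear on `D`, and for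
every `λ > 0` the operator `A + λI : D → X` is bijective with bounded inverse
`R(λ)` satisfying `‖λR(λ)‖ ≤ M`. Then for `ψ ∈ D` and `φ := Aψ` the Bochner integrals
defining the Balakrishnan powers `A^{-β}φ = (sin(πβ)/π)∫₀^∞ λ^{-β} R(λ)φ dλ` converge
for all `β ∈ (0,1)`, and `A^{-α}φ → A^{-1/2}φ` as `α → 1/2⁺`, quantitatively:
for every `ε > 0` there is `δ > 0` such that `1/2 < α < 1/2 + δ` implies
`‖A^{-α}φ - A^{-1/2}φ‖ ≤ ε(‖φ‖ + ‖ψ‖)`. -/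
theorem negative_fractional_powers_converge
    {X : Type*} [NormedAddCommGroup X] [NormedSpace ℝ X] [CompleteSpace X]
    (D : Submodule ℝ X) (A : X → X)
    (hAlin : ∀ x ∈ D, ∀ y ∈ D, ∀ a b : ℝ, A (a • x + b • y) = a • A x + b • A y)
    (M : ℝ) (hM : 1 ≤ M)
    (R : ℝ → X →L[ℝ] X)
    (hRmem : ∀ l : ℝ, 0 < l → ∀ φ : X, R l φ ∈ D)
    (hAR : ∀ l : ℝ, 0 < l → ∀ φ : X, A (R l φ) + l • R l φ = φ)
    (hRA : ∀ l : ℝ, 0 < l → ∀ ψ ∈ D, R l (A ψ + l • ψ) = ψ)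
    (hRnorm : ∀ l : ℝ, 0 < l → ∀ φ : X, ‖l • R l φ‖ ≤ M * ‖φ‖)
    (ψ : X) (hψ : ψ ∈ D) :
    (∀ β ∈ Set.Ioo (0:ℝ) 1,
        IntegrableOn (fun l : ℝ => l ^ (-β) • R l (A ψ)) (Set.Ioi 0)) ∧
    ∀ ε > (0:ℝ), ∃ δ > (0:ℝ), ∀ α : ℝ, 1/2 < α → α < 1/2 + δ →
      ‖(Real.sin (π * α) / π) • (∫ l in Set.Ioi (0:ℝ), l ^ (-α) • R l (A ψ))
        - (Real.sin (π * (1/2)) / π) • (∫ l in Set.Ioi (0:ℝ), l ^ (-(1/2 : ℝ)) • R l (A ψ))‖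
        ≤ ε * (‖A ψ‖ + ‖ψ‖) := by
  set φ := A ψ with hφ
  -- basic norm bound in division form
  have hb2 : ∀ l : ℝ, 0 < l → ∀ x : X, ‖R l x‖ ≤ M * ‖x‖ / l := by
    intro l hl x
    have h := hRnorm l hl x
    rw [norm_smul, Real.norm_eq_abs, abs_of_pos hl] at h
    rw [le_div_iff₀ hl, mul_comm]
    exact h
  -- R l φ = ψ - l • R l ψ
  have hRψ : ∀ l : ℝ, 0 < l → R l φ = ψ - l • R l ψ := by
    intro l hl
    have h := hRA l hl ψ hψ
    rw [map_add, ContinuousLinearMap.map_smul] at h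
    exact eq_sub_of_add_eq h
  have hb1 : ∀ l : ℝ, 0 < l → ‖R l φ‖ ≤ (1+M) * ‖ψ‖ := by
    intro l hl
    rw [hRψ l hl]
    have h1 := hRnorm l hl ψ
    calc ‖ψ - l • R l ψ‖ ≤ ‖ψ‖ + ‖l • R l ψ‖ := norm_sub_le _ _
      _ ≤ ‖ψ‖ + M * ‖ψ‖ := by linarith
      _ = (1+M) * ‖ψ‖ := by ring
  -- resolvent identity ⇒ quantitative continuity estimate
  have hres : ∀ la mu : ℝ, 0 < la → 0 < mu →
      la * (mu * ‖R la φ - R mu φ‖) ≤ |la - mu| * (M * (M * ‖φ‖)) := by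
    intro la mu hla hmu
    have h1 : A (R mu φ) = φ - mu • R mu φ := eq_sub_of_add_eq (hAR mu hmu φ)
    have h2 : R la (A (R mu φ) + la • R mu φ) = R mu φ :=
      hRA la hla _ (hRmem mu hmu φ)
    rw [h1, show φ - mu • R mu φ + la • R mu φ = φ + (la - mu) • R mu φ by
      rw [sub_smul]; abel, map_add, ContinuousLinearMap.map_smul] at h2
    have hkey : R la φ - R mu φ = -((la - mu) • R la (R mu φ)) := by
      have h3 := eq_sub_of_add_eq h2
      rw [h3]; abel
    rw [hkey, norm_neg, norm_smul, Real.norm_eq_abs]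
    have e1 : ‖R la (R mu φ)‖ * la ≤ M * ‖R mu φ‖ :=
      (le_div_iff₀ hla).mp (hb2 la hla (R mu φ))
    have e2 : ‖R mu φ‖ * mu ≤ M * ‖φ‖ :=
      (le_div_iff₀ hmu).mp (hb2 mu hmu φ)
    have h3 : 0 ≤ |la - mu| := abs_nonneg _
    nlinarith [mul_le_mul_of_nonneg_left e1 hmu.le, mul_le_mul_of_nonneg_left e2 (by linarith : (0:ℝ) ≤ M),
      norm_nonneg (R la (R mu φ)), norm_nonneg (R mu φ), mul_le_mul_of_nonneg_left
        (mul_le_mul_of_nonneg_left e2 (by linarith : (0:ℝ) ≤ M)) h3,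
      mul_le_mul_of_nonneg_left (mul_le_mul_of_nonneg_left e1 hmu.le) h3]
  -- continuity of l ↦ R l φ on (0, ∞)
  have hcont : ContinuousOn (fun l : ℝ => R l φ) (Ioi (0:ℝ)) := by
    intro x hx
    rw [Metric.continuousWithinAt_iff]
    intro ε hε
    simp only [mem_Ioi] at hx
    set C : ℝ := 2 * (M * (M * ‖φ‖)) / (x * x) with hC
    have hC0 : 0 ≤ C := by positivity
    refine ⟨min (x/2) (ε / (C + 1)), lt_min (by linarith) (by positivity), ?_⟩
    intro y hy hdy
    simp only [mem_Ioi] at hy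
    rw [Real.dist_eq] at hdy
    have hd1 : |y - x| < x/2 := lt_of_lt_of_le hdy (min_le_left _ _)
    have hd2 : |y - x| < ε / (C + 1) := lt_of_lt_of_le hdy (min_le_right _ _)
    have hyx : x/2 < y := by
      have := abs_lt.mp hd1
      linarith [this.1]
    have hr := hres y x hy hx
    rw [dist_eq_norm]
    have hnn : 0 ≤ ‖R y φ - R x φ‖ := norm_nonneg _
    -- y * (x * ‖d‖) ≤ |y-x| * M²‖φ‖, y > x/2 ⇒ ‖d‖ ≤ |y-x| * C
    have hdC : ‖R y φ - R x φ‖ ≤ |y - x| * C := by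
      rw [hC, ← mul_div_assoc, le_div_iff₀ (by positivity : (0:ℝ) < x * x)]
      nlinarith [abs_nonneg (y - x), hr, mul_le_mul_of_nonneg_left (le_of_lt hyx) (mul_nonneg hnn hx.le)]
    have : |y - x| * C ≤ |y - x| * (C + 1) := by nlinarith [abs_nonneg (y - x)]
    have h4 : |y - x| * (C + 1) < (ε / (C + 1)) * (C + 1) := by
      apply mul_lt_mul_of_pos_right hd2; linarith
    rw [div_mul_cancel₀ ε (by linarith : C + 1 ≠ 0)] at h4
    linarith
  -- a.e. strong measurability
  have hms : ∀ β : ℝ, AEStronglyMeasurable (fun l : ℝ => l ^ (-β) • R l φ)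
      (volume.restrict (Ioi (0:ℝ))) := by
    intro β
    apply ContinuousOn.aestronglyMeasurable _ measurableSet_Ioi
    exact ContinuousOn.smul
      (fun x hx => (Real.continuousAt_rpow_const x (-β)
        (Or.inl (ne_of_gt hx))).continuousWithinAt) hcont
  have hms1 : ∀ β : ℝ, AEStronglyMeasurable (fun l : ℝ => l ^ (-β) • R l φ)
      (volume.restrict (Ioc (0:ℝ) 1)) := fun β =>
    (hms β).mono_measure (Measure.restrict_mono Ioc_subset_Ioi_self le_rfl)
  have hms2 : ∀ β : ℝ, AEStronglyMeasurable (fun l : ℝ => l ^ (-β) • R l φ)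
      (volume.restrict (Ioi (1:ℝ))) := fun β =>
    (hms β).mono_measure (Measure.restrict_mono (Ioi_subset_Ioi zero_le_one) le_rfl)
  -- integrability on (0,1]
  have hint1 : ∀ β : ℝ, β < 1 →
      IntegrableOn (fun l : ℝ => l ^ (-β) • R l φ) (Ioc (0:ℝ) 1) := by
    intro β hβ
    apply Integrable.mono' ((aux_intOn_Ioc hβ).mul_const ((1+M) * ‖ψ‖)) (hms1 β)
    filter_upwards [ae_restrict_mem measurableSet_Ioc] with l hl
    rw [norm_smul, Real.norm_eq_abs, abs_of_pos (Real.rpow_pos_of_pos hl.1 _)]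
    exact mul_le_mul_of_nonneg_left (hb1 l hl.1) (Real.rpow_nonneg hl.1.le _)
  -- integrability on (1,∞)
  have hint2 : ∀ β : ℝ, 0 < β →
      IntegrableOn (fun l : ℝ => l ^ (-β) • R l φ) (Ioi (1:ℝ)) := by
    intro β hβ
    apply Integrable.mono' ((aux_intOn_Ioi hβ).mul_const (M * ‖φ‖)) (hms2 β)
    filter_upwards [ae_restrict_mem measurableSet_Ioi] with l hl
    have hl0 : (0:ℝ) < l := lt_trans one_pos hl
    rw [norm_smul, Real.norm_eq_abs, abs_of_pos (Real.rpow_pos_of_pos hl0 _)]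
    have h1 : ‖R l φ‖ ≤ M * ‖φ‖ / l := hb2 l hl0 φ
    have h2 : l ^ (-β) * (M * ‖φ‖ / l) = l ^ (-β-1) * (M * ‖φ‖) := by
      rw [Real.rpow_sub hl0, Real.rpow_one]; ring
    calc l ^ (-β) * ‖R l φ‖ ≤ l ^ (-β) * (M * ‖φ‖ / l) :=
          mul_le_mul_of_nonneg_left h1 (Real.rpow_nonneg hl0.le _)
      _ = l ^ (-β-1) * (M * ‖φ‖) := h2
  have hint : ∀ β ∈ Set.Ioo (0:ℝ) 1,
      IntegrableOn (fun l : ℝ => l ^ (-β) • R l φ) (Ioi (0:ℝ)) := by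
    intro β hβ
    rw [← Ioc_union_Ioi_eq_Ioi (zero_le_one (α := ℝ))]
    exact (hint1 β hβ.2).union (hint2 β hβ.1)
  refine ⟨hint, ?_⟩
  -- split of the integral
  have hsplit : ∀ β ∈ Set.Ioo (0:ℝ) 1,
      (∫ l in Ioi (0:ℝ), l ^ (-β) • R l φ)
        = (∫ l in Ioc (0:ℝ) 1, l ^ (-β) • R l φ) + ∫ l in Ioi (1:ℝ), l ^ (-β) • R l φ := by
    intro β hβ
    rw [← setIntegral_union (Ioc_disjoint_Ioi le_rfl) measurableSet_Ioi
      (hint1 β hβ.2) (hint2 β hβ.1), Ioc_union_Ioi_eq_Ioi (zero_le_one (α := ℝ))]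
  -- norm bounds for the pieces
  have hJ1 : ∀ β : ℝ, β < 1 →
      ‖∫ l in Ioc (0:ℝ) 1, l ^ (-β) • R l φ‖ ≤ 1/(1-β) * ((1+M) * ‖ψ‖) := by
    intro β hβ
    calc ‖∫ l in Ioc (0:ℝ) 1, l ^ (-β) • R l φ‖
          ≤ ∫ l in Ioc (0:ℝ) 1, l ^ (-β) * ((1+M) * ‖ψ‖) := by
            apply norm_integral_le_of_norm_le ((aux_intOn_Ioc hβ).mul_const ((1+M) * ‖ψ‖))
            filter_upwards [ae_restrict_mem measurableSet_Ioc] with l hl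
            rw [norm_smul, Real.norm_eq_abs, abs_of_pos (Real.rpow_pos_of_pos hl.1 _)]
            exact mul_le_mul_of_nonneg_left (hb1 l hl.1) (Real.rpow_nonneg hl.1.le _)
        _ = 1/(1-β) * ((1+M) * ‖ψ‖) := by rw [integral_mul_const, aux_int_Ioc hβ]
  have hJ2 : ∀ β : ℝ, 0 < β →
      ‖∫ l in Ioi (1:ℝ), l ^ (-β) • R l φ‖ ≤ 1/β * (M * ‖φ‖) := by
    intro β hβ
    calc ‖∫ l in Ioi (1:ℝ), l ^ (-β) • R l φ‖
          ≤ ∫ l in Ioi (1:ℝ), l ^ (-β-1) * (M * ‖φ‖) := by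
            apply norm_integral_le_of_norm_le ((aux_intOn_Ioi hβ).mul_const (M * ‖φ‖))
            filter_upwards [ae_restrict_mem measurableSet_Ioi] with l hl
            have hl0 : (0:ℝ) < l := lt_trans one_pos hl
            rw [norm_smul, Real.norm_eq_abs, abs_of_pos (Real.rpow_pos_of_pos hl0 _)]
            have h2 : l ^ (-β) * (M * ‖φ‖ / l) = l ^ (-β-1) * (M * ‖φ‖) := by
              rw [Real.rpow_sub hl0, Real.rpow_one]; ring
            calc l ^ (-β) * ‖R l φ‖ ≤ l ^ (-β) * (M * ‖φ‖ / l) :=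
                  mul_le_mul_of_nonneg_left (hb2 l hl0 φ) (Real.rpow_nonneg hl0.le _)
              _ = l ^ (-β-1) * (M * ‖φ‖) := h2
        _ = 1/β * (M * ‖φ‖) := by rw [integral_mul_const, aux_int_Ioi hβ]
  -- difference bounds
  have hD1 : ∀ α : ℝ, 1/2 < α → α < 1 →
      ‖∫ l in Ioc (0:ℝ) 1, (l ^ (-α) - l ^ (-(1/2:ℝ))) • R l φ‖
        ≤ (1/(1-α) - 2) * ((1+M) * ‖ψ‖) := by
    intro α hα1 hα2
    have hintb : IntegrableOn
        (fun l : ℝ => (l ^ (-α) - l ^ (-(1/2:ℝ))) * ((1+M) * ‖ψ‖)) (Ioc (0:ℝ) 1) :=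
      ((aux_intOn_Ioc hα2).sub (aux_intOn_Ioc (by norm_num))).mul_const _
    calc ‖∫ l in Ioc (0:ℝ) 1, (l ^ (-α) - l ^ (-(1/2:ℝ))) • R l φ‖
          ≤ ∫ l in Ioc (0:ℝ) 1, (l ^ (-α) - l ^ (-(1/2:ℝ))) * ((1+M) * ‖ψ‖) := by
            apply norm_integral_le_of_norm_le hintb
            filter_upwards [ae_restrict_mem measurableSet_Ioc] with l hl
            have hge : l ^ (-(1/2:ℝ)) ≤ l ^ (-α) :=
              Real.rpow_le_rpow_of_exponent_ge hl.1 hl.2 (by linarith)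
            rw [norm_smul, Real.norm_eq_abs, abs_of_nonneg (by linarith)]
            exact mul_le_mul_of_nonneg_left (hb1 l hl.1) (by linarith)
        _ = (1/(1-α) - 2) * ((1+M) * ‖ψ‖) := by
            rw [integral_mul_const, integral_sub (aux_intOn_Ioc hα2) (aux_intOn_Ioc (by norm_num)),
              aux_int_Ioc hα2, aux_int_Ioc (show (1/2:ℝ) < 1 by norm_num)]
            norm_num
  have hD2 : ∀ α : ℝ, 1/2 < α →
      ‖∫ l in Ioi (1:ℝ), (l ^ (-α) - l ^ (-(1/2:ℝ))) • R l φ‖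
        ≤ (2 - 1/α) * (M * ‖φ‖) := by
    intro α hα1
    have hα0 : (0:ℝ) < α := by linarith
    have hintb : IntegrableOn
        (fun l : ℝ => (l ^ (-(1/2:ℝ)-1) - l ^ (-α-1)) * (M * ‖φ‖)) (Ioi (1:ℝ)) :=
      ((aux_intOn_Ioi (by norm_num)).sub (aux_intOn_Ioi hα0)).mul_const _
    calc ‖∫ l in Ioi (1:ℝ), (l ^ (-α) - l ^ (-(1/2:ℝ))) • R l φ‖
          ≤ ∫ l in Ioi (1:ℝ), (l ^ (-(1/2:ℝ)-1) - l ^ (-α-1)) * (M * ‖φ‖) := by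
            apply norm_integral_le_of_norm_le hintb
            filter_upwards [ae_restrict_mem measurableSet_Ioi] with l hl
            have hl0 : (0:ℝ) < l := lt_trans one_pos hl
            have hle : l ^ (-α) ≤ l ^ (-(1/2:ℝ)) :=
              Real.rpow_le_rpow_of_exponent_le hl.le (by linarith)
            rw [norm_smul, Real.norm_eq_abs, abs_of_nonpos (by linarith), neg_sub]
            have h1 : ‖R l φ‖ ≤ M * ‖φ‖ / l := hb2 l hl0 φ
            have h2 : (l ^ (-(1/2:ℝ)) - l ^ (-α)) * (M * ‖φ‖ / l)
                = (l ^ (-(1/2:ℝ)-1) - l ^ (-α-1)) * (M * ‖φ‖) := by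
              rw [Real.rpow_sub hl0, Real.rpow_sub hl0, Real.rpow_one]; ring
            calc (l ^ (-(1/2:ℝ)) - l ^ (-α)) * ‖R l φ‖
                ≤ (l ^ (-(1/2:ℝ)) - l ^ (-α)) * (M * ‖φ‖ / l) :=
                  mul_le_mul_of_nonneg_left h1 (by linarith)
              _ = (l ^ (-(1/2:ℝ)-1) - l ^ (-α-1)) * (M * ‖φ‖) := h2
        _ = (2 - 1/α) * (M * ‖φ‖) := by
            rw [integral_mul_const, integral_sub (aux_intOn_Ioi (by norm_num)) (aux_intOn_Ioi hα0),
              aux_int_Ioi (show (0:ℝ) < 1/2 by norm_num), aux_int_Ioi hα0]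
            norm_num
  -- the modulus function
  set S : ℝ := ‖φ‖ + ‖ψ‖ with hS
  have hS0 : 0 ≤ S := by positivity
  set G : ℝ → ℝ := fun α => (1/(1-α) - 2) * (1+M) + (2 - 1/α) * M
    + |Real.sin (π * α) / π - Real.sin (π * (1/2)) / π| * (2*(1+M) + 2*M) with hG
  have hGc : ContinuousAt G (1/2 : ℝ) := by
    apply ContinuousAt.add
    apply ContinuousAt.add
    · exact (ContinuousAt.sub (ContinuousAt.div continuousAt_const
        (continuousAt_const.sub continuousAt_id) (by norm_num)) continuousAt_const).mul
        continuousAt_const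
    · exact (continuousAt_const.sub (ContinuousAt.div continuousAt_const
        continuousAt_id (by norm_num))).mul continuousAt_const
    · apply ContinuousAt.mul _ continuousAt_const
      apply ContinuousAt.abs
      apply ContinuousAt.sub _ continuousAt_const
      exact (Real.continuous_sin.comp (continuous_const.mul continuous_id)).continuousAt.div_const _
  have hG0 : G (1/2 : ℝ) = 0 := by
    simp only [hG]; norm_num
  intro ε hε
  obtain ⟨δ₀, hδ₀, hball⟩ := Metric.continuousAt_iff.mp hGc ε hε
  refine ⟨min δ₀ (1/4), lt_min hδ₀ (by norm_num), ?_⟩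
  intro α hα1 hα2
  have hα3 : α < 3/4 := by
    have := min_le_right δ₀ (1/4 : ℝ)
    linarith
  have hα4 : α < 1 := by linarith
  have hα0 : (0:ℝ) < α := by linarith
  have hGα : G α ≤ ε := by
    have hd : dist α (1/2 : ℝ) < δ₀ := by
      rw [Real.dist_eq, abs_of_pos (by linarith : (0:ℝ) < α - 1/2)]
      have := min_le_left δ₀ (1/4 : ℝ)
      linarith
    have := hball hd
    rw [Real.dist_eq, hG0, sub_zero] at this
    exact le_of_lt (lt_of_le_of_lt (le_abs_self _) this)
  -- abbreviations
  have hαmem : α ∈ Set.Ioo (0:ℝ) 1 := ⟨hα0, hα4⟩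
  have hhalf : (1/2:ℝ) ∈ Set.Ioo (0:ℝ) 1 := by norm_num
  set cα : ℝ := Real.sin (π * α) / π with hcα
  set ch : ℝ := Real.sin (π * (1/2)) / π with hch
  set J1α := ∫ l in Ioc (0:ℝ) 1, l ^ (-α) • R l φ with hJ1α
  set J2α := ∫ l in Ioi (1:ℝ), l ^ (-α) • R l φ with hJ2α
  set J1h := ∫ l in Ioc (0:ℝ) 1, l ^ (-(1/2:ℝ)) • R l φ with hJ1h
  set J2h := ∫ l in Ioi (1:ℝ), l ^ (-(1/2:ℝ)) • R l φ with hJ2h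
  set D1 := ∫ l in Ioc (0:ℝ) 1, (l ^ (-α) - l ^ (-(1/2:ℝ))) • R l φ with hD1def
  set D2 := ∫ l in Ioi (1:ℝ), (l ^ (-α) - l ^ (-(1/2:ℝ))) • R l φ with hD2def
  have hd1 : J1α - J1h = D1 := by
    rw [hJ1α, hJ1h, hD1def, ← integral_sub (hint1 α hα4) (hint1 (1/2) (by norm_num))]
    simp only [sub_smul]
  have hd2 : J2α - J2h = D2 := by
    rw [hJ2α, hJ2h, hD2def, ← integral_sub (hint2 α hα0) (hint2 (1/2) (by norm_num))]
    simp only [sub_smul]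
  have hIα := hsplit α hαmem
  have hIh := hsplit (1/2 : ℝ) hhalf
  rw [hIα, hIh]
  have halg : cα • (J1α + J2α) - ch • (J1h + J2h)
      = cα • D1 + cα • D2 + (cα - ch) • (J1h + J2h) := by
    rw [← hd1, ← hd2, smul_sub, smul_sub, sub_smul, smul_add, smul_add, smul_add]
    abel
  rw [halg]
  have hcabs : |cα| ≤ 1 := by
    rw [hcα, abs_div, abs_of_pos Real.pi_pos]
    rw [div_le_one Real.pi_pos]
    calc |Real.sin (π * α)| ≤ 1 := Real.abs_sin_le_one _
      _ ≤ π := by linarith [Real.pi_gt_three]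
  have hb1α := hD1 α hα1 hα4
  have hb2α := hD2 α hα1
  have hbJ1 := hJ1 (1/2 : ℝ) (by norm_num)
  have hbJ2 := hJ2 (1/2 : ℝ) (by norm_num)
  have hnorm : ‖cα • D1 + cα • D2 + (cα - ch) • (J1h + J2h)‖
      ≤ |cα| * ‖D1‖ + |cα| * ‖D2‖ + |cα - ch| * (‖J1h‖ + ‖J2h‖) := by
    calc ‖cα • D1 + cα • D2 + (cα - ch) • (J1h + J2h)‖
        ≤ ‖cα • D1 + cα • D2‖ + ‖(cα - ch) • (J1h + J2h)‖ := norm_add_le _ _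
      _ ≤ ‖cα • D1‖ + ‖cα • D2‖ + ‖(cα - ch) • (J1h + J2h)‖ := by
          linarith [norm_add_le (cα • D1) (cα • D2)]
      _ ≤ |cα| * ‖D1‖ + |cα| * ‖D2‖ + |cα - ch| * (‖J1h‖ + ‖J2h‖) := by
          rw [norm_smul, norm_smul, norm_smul, Real.norm_eq_abs, Real.norm_eq_abs]
          have := norm_add_le J1h J2h
          have h0 : 0 ≤ |cα - ch| := abs_nonneg _
          nlinarith [norm_nonneg D1, norm_nonneg D2]
  -- positivity facts for the final combination
  have hp1 : 0 ≤ 1/(1-α) - 2 := by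
    rw [sub_nonneg, le_div_iff₀ (by linarith : (0:ℝ) < 1-α)]
    linarith
  have hp2 : 0 ≤ 2 - 1/α := by
    rw [sub_nonneg, div_le_iff₀ hα0]
    linarith
  have hψ0 : (0:ℝ) ≤ ‖ψ‖ := norm_nonneg _
  have hφ0 : (0:ℝ) ≤ ‖φ‖ := norm_nonneg _
  have hM0 : (0:ℝ) ≤ M := by linarith
  have habs0 : 0 ≤ |cα| := abs_nonneg _
  have habs1 : 0 ≤ |cα - ch| := abs_nonneg _
  have hfin : |cα| * ‖D1‖ + |cα| * ‖D2‖ + |cα - ch| * (‖J1h‖ + ‖J2h‖) ≤ G α * S := by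
    have t1 : |cα| * ‖D1‖ ≤ (1/(1-α) - 2) * ((1+M) * ‖ψ‖) := by
      nlinarith [norm_nonneg D1]
    have t2 : |cα| * ‖D2‖ ≤ (2 - 1/α) * (M * ‖φ‖) := by
      nlinarith [norm_nonneg D2]
    have t3 : |cα - ch| * (‖J1h‖ + ‖J2h‖)
        ≤ |cα - ch| * (2 * ((1+M) * ‖ψ‖) + 2 * (M * ‖φ‖)) := by
      have : ‖J1h‖ + ‖J2h‖ ≤ 2 * ((1+M) * ‖ψ‖) + 2 * (M * ‖φ‖) := by
        have e1 : (1:ℝ)/(1 - 1/2) = 2 := by norm_num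
        have e2 : (1:ℝ)/(1/2) = 2 := by norm_num
        rw [e1] at hbJ1; rw [e2] at hbJ2
        linarith
      exact mul_le_mul_of_nonneg_left this habs1
    rw [hG, hS]
    nlinarith [mul_nonneg habs1 hψ0, mul_nonneg habs1 hφ0, mul_nonneg habs1 hM0,
      mul_nonneg (mul_nonneg habs1 hM0) hψ0, mul_nonneg (mul_nonneg habs1 hM0) hφ0,
      mul_nonneg (mul_nonneg hp1 hM0) hφ0, mul_nonneg hp1 hφ0,
      mul_nonneg (mul_nonneg hp2 hM0) hψ0]
  have : G α * S ≤ ε * S := mul_le_mul_of_nonneg_right hGα hS0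
  calc ‖cα • D1 + cα • D2 + (cα - ch) • (J1h + J2h)‖
      ≤ G α * S := le_trans hnorm hfin
    _ ≤ ε * S := this
end

section
/- Convergence of the resolvents of fractional powers (Lemma 6.2 of the paper, abstract form): in the resolvent setting, for α ∈ [1/2, 3/4] define B_α φ := (sin(απ)/π) ∫₀^∞ [ λ^α / (λ^{2α} + 2 λ^α cos(πα) + 1) ] R(λ)φ dλ (this Bochner integral converges absolutely for every φ ∈ X; B_α is the integral representation of (I + A^α)^{−1}). Then for every ψ ∈ D, setting φ := Aψ, one has ‖B_α φ − B_{1/2} φ‖_X → 0 as α → 1/2⁺; more precisely, for every ε > 0 there is δ > 0 such that α ∈ (1/2, 1/2 + δ) implies ‖B_α φ − B_{1/2} φ‖_X ≤ ε (‖φ‖_X + ‖ψ‖_X). -/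
open MeasureTheory Real Set
open Filter Topology

private lemma pw_rpow_integrable (C a b : ℝ) (ha : -1 < a) (hb : b < -1) :
    IntegrableOn (fun l : ℝ => C * (if l ≤ 1 then l ^ a else l ^ b)) (Set.Ioi 0) := by
  rw [← Set.Ioc_union_Ioi_eq_Ioi (zero_le_one (α := ℝ))]
  apply MeasureTheory.IntegrableOn.union
  · refine MeasureTheory.IntegrableOn.congr_fun
      (((intervalIntegral.intervalIntegrable_rpow' ha).1).const_mul C) ?_ measurableSet_Ioc
    intro l hl
    simp [hl.2]
  · refine MeasureTheory.IntegrableOn.congr_fun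
      ((integrableOn_Ioi_rpow_of_lt hb one_pos).const_mul C) ?_ measurableSet_Ioi
    intro l hl
    simp [not_le.mpr (mem_Ioi.mp hl)]

private lemma cos_pi_alpha (α : ℝ) (h1 : 1/2 ≤ α) (h2 : α ≤ 3/4) :
    Real.cos (π * α) ≤ 0 ∧ (Real.cos (π * α))^2 ≤ 1/2 := by
  have hπ := Real.pi_pos
  have hle : Real.cos (π * α) ≤ 0 :=
    Real.cos_nonpos_of_pi_div_two_le_of_le (by nlinarith) (by nlinarith)
  have hge : -(Real.sqrt 2/2) ≤ Real.cos (π * α) := by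
    have h34 : (3*π/4 : ℝ) = π - π/4 := by ring
    have := Real.cos_le_cos_of_nonneg_of_le_pi (by nlinarith : (0:ℝ) ≤ π * α)
      (by nlinarith : (3*π/4 : ℝ) ≤ π) (by nlinarith : π * α ≤ 3*π/4)
    rwa [h34, Real.cos_pi_sub, Real.cos_pi_div_four] at this
  refine ⟨hle, ?_⟩
  have hs : Real.sqrt 2 ^ 2 = 2 := Real.sq_sqrt (by norm_num)
  have hs0 : 0 ≤ Real.sqrt 2 := Real.sqrt_nonneg 2
  nlinarith [hle, hge]

/-- **Convergence of the resolvents of fractional powers (Lemma 6.2, abstract form).**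
In the resolvent setting, for `α ∈ [1/2, 3/4]` the Bochner integral
`B_α φ = (sin(απ)/π) ∫₀^∞ [λ^α/(λ^{2α} + 2λ^α cos(πα) + 1)] R(λ)φ dλ`
(the integral representation of `(I + A^α)^{-1}`) converges absolutely for every
`φ ∈ X`, and for `ψ ∈ D`, `φ := Aψ`, one has `‖B_α φ - B_{1/2} φ‖ → 0` as
`α → 1/2⁺`; quantitatively, for every `ε > 0` there is `δ > 0` such that
`1/2 < α < 1/2 + δ` implies `‖B_α φ - B_{1/2} φ‖ ≤ ε(‖φ‖ + ‖ψ‖)`. -/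
theorem resolvents_of_fractional_powers_converge
    {X : Type*} [NormedAddCommGroup X] [NormedSpace ℝ X] [CompleteSpace X]
    (D : Submodule ℝ X) (A : X → X)
    (hAlin : ∀ x ∈ D, ∀ y ∈ D, ∀ a b : ℝ, A (a • x + b • y) = a • A x + b • A y)
    (M : ℝ) (hM : 1 ≤ M)
    (R : ℝ → X →L[ℝ] X)
    (hRmem : ∀ l : ℝ, 0 < l → ∀ φ : X, R l φ ∈ D)
    (hAR : ∀ l : ℝ, 0 < l → ∀ φ : X, A (R l φ) + l • R l φ = φ)
    (hRA : ∀ l : ℝ, 0 < l → ∀ ψ ∈ D, R l (A ψ + l • ψ) = ψ)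
    (hRnorm : ∀ l : ℝ, 0 < l → ∀ φ : X, ‖l • R l φ‖ ≤ M * ‖φ‖)
    (ψ : X) (hψ : ψ ∈ D) :
    (∀ α ∈ Set.Icc (1/2 : ℝ) (3/4), ∀ φ : X,
        IntegrableOn
          (fun l : ℝ =>
            (l ^ α / (l ^ (2 * α) + 2 * l ^ α * Real.cos (π * α) + 1)) • R l φ)
          (Set.Ioi 0)) ∧
    ∀ ε > (0:ℝ), ∃ δ > (0:ℝ), ∀ α : ℝ, 1/2 < α → α < 1/2 + δ →
      ‖(Real.sin (α * π) / π) •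
          (∫ l in Set.Ioi (0:ℝ),
            (l ^ α / (l ^ (2 * α) + 2 * l ^ α * Real.cos (π * α) + 1)) • R l (A ψ))
        - (Real.sin ((1/2 : ℝ) * π) / π) •
          (∫ l in Set.Ioi (0:ℝ),
            (l ^ (1/2 : ℝ) /
              (l ^ (2 * (1/2 : ℝ)) + 2 * l ^ (1/2 : ℝ) * Real.cos (π * (1/2 : ℝ)) + 1)) •
              R l (A ψ))‖
        ≤ ε * (‖A ψ‖ + ‖ψ‖) := by
  have hπ : (0:ℝ) < π := Real.pi_pos
  have hM0 : (0:ℝ) ≤ M := le_trans zero_le_one hM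
  -- basic resolvent norm bound
  have hRle : ∀ l : ℝ, 0 < l → ∀ x : X, ‖R l x‖ ≤ M * ‖x‖ / l := by
    intro l hl x
    rw [le_div_iff₀ hl]
    calc ‖R l x‖ * l = ‖l • R l x‖ := by
          rw [norm_smul, Real.norm_eq_abs, abs_of_pos hl]; ring
      _ ≤ M * ‖x‖ := hRnorm l hl x
  -- continuity of the resolvent in the parameter
  have hRcont : ∀ x : X, ContinuousOn (fun l => R l x) (Set.Ioi (0:ℝ)) := by
    intro x l₀ hl₀
    have hl₀' : (0:ℝ) < l₀ := hl₀
    have hdiff : ∀ μ : ℝ, 0 < μ →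
        ‖R μ x - R l₀ x‖ ≤ |l₀ - μ| * (M * (M * ‖x‖ / l₀) / μ) := by
      intro μ hμ
      have h1 : A (R l₀ x) = x - l₀ • R l₀ x := by
        rw [eq_sub_iff_add_eq]; exact hAR l₀ hl₀' x
      have h2 : R μ (A (R l₀ x) + μ • R l₀ x) = R l₀ x := hRA μ hμ _ (hRmem l₀ hl₀' x)
      rw [h1] at h2
      have h3 : x - l₀ • R l₀ x + μ • R l₀ x = x + (μ - l₀) • R l₀ x := by
        rw [sub_smul]; abel
      rw [h3, map_add, ContinuousLinearMap.map_smul] at h2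
      have h4 : R μ x - R l₀ x = (l₀ - μ) • R μ (R l₀ x) := by
        calc R μ x - R l₀ x
            = R μ x - (R μ x + (μ - l₀) • R μ (R l₀ x)) := by rw [h2]
          _ = -((μ - l₀) • R μ (R l₀ x)) := by abel
          _ = (l₀ - μ) • R μ (R l₀ x) := by rw [← neg_smul, neg_sub]
      rw [h4, norm_smul, Real.norm_eq_abs]
      refine mul_le_mul_of_nonneg_left ?_ (abs_nonneg _)
      refine le_trans (hRle μ hμ _) ?_
      gcongr
      exact hRle l₀ hl₀' x
    have hb : Tendsto (fun μ : ℝ => |l₀ - μ| * (M * (M * ‖x‖ / l₀) / μ)) (𝓝 l₀) (𝓝 0) := by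
      have hc : ContinuousAt (fun μ : ℝ => |l₀ - μ| * (M * (M * ‖x‖ / l₀) / μ)) l₀ :=
        ((continuous_const.sub continuous_id).abs.continuousAt).mul
          (ContinuousAt.div continuousAt_const continuousAt_id (ne_of_gt hl₀'))
      have hval : |l₀ - l₀| * (M * (M * ‖x‖ / l₀) / l₀) = 0 := by simp
      simpa [ContinuousAt, hval] using hc
    have key : Tendsto (fun μ : ℝ => ‖R μ x - R l₀ x‖) (𝓝[Set.Ioi 0] l₀) (𝓝 0) := by
      refine squeeze_zero' ?_ ?_ (hb.mono_left nhdsWithin_le_nhds)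
      · exact Filter.eventually_of_mem self_mem_nhdsWithin fun μ _ => norm_nonneg _
      · exact Filter.eventually_of_mem self_mem_nhdsWithin fun μ hμ => hdiff μ hμ
    exact tendsto_iff_norm_sub_tendsto_zero.mpr key
  -- square identity for rpow
  have hsq : ∀ (l:ℝ), 0 < l → ∀ α:ℝ, l ^ (2*α) = (l ^ α)^2 := by
    intro l hl α
    rw [show 2*α = α + α by ring, Real.rpow_add hl, sq]
  -- denominator bounds
  have hden : ∀ α : ℝ, 1/2 ≤ α → α ≤ 3/4 → ∀ l:ℝ, 0 < l →
      1/2 ≤ l ^ (2*α) + 2 * l ^ α * Real.cos (π * α) + 1 ∧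
      (l ^ α)^2 / 2 ≤ l ^ (2*α) + 2 * l ^ α * Real.cos (π * α) + 1 := by
    intro α hα1 hα2 l hl
    obtain ⟨hc1, hc2⟩ := cos_pi_alpha α hα1 hα2
    have hx : 0 < l ^ α := Real.rpow_pos_of_pos hl α
    rw [hsq l hl α]
    constructor
    · nlinarith [sq_nonneg (l ^ α + Real.cos (π * α))]
    · nlinarith [sq_nonneg (l ^ α + 2 * Real.cos (π * α))]
  -- coefficient bounds
  have hcoef : ∀ α : ℝ, 1/2 ≤ α → α ≤ 3/4 → ∀ l:ℝ, 0 < l →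
      0 ≤ l ^ α / (l ^ (2*α) + 2 * l ^ α * Real.cos (π*α) + 1) ∧
      l ^ α / (l ^ (2*α) + 2 * l ^ α * Real.cos (π*α) + 1) ≤ 2 * l ^ α ∧
      l ^ α / (l ^ (2*α) + 2 * l ^ α * Real.cos (π*α) + 1) ≤ 2 / l ^ α := by
    intro α hα1 hα2 l hl
    obtain ⟨hd1, hd2⟩ := hden α hα1 hα2 l hl
    have hx : 0 < l ^ α := Real.rpow_pos_of_pos hl α
    have hdpos : 0 < l ^ (2*α) + 2 * l ^ α * Real.cos (π*α) + 1 := by linarith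
    refine ⟨div_nonneg hx.le hdpos.le, ?_, ?_⟩
    · rw [div_le_iff₀ hdpos]; nlinarith
    · rw [div_le_div_iff₀ hdpos hx]; nlinarith
  -- norm bound for the integrand (general vector)
  have hFbd : ∀ α : ℝ, 1/2 ≤ α → α ≤ 3/4 → ∀ (x : X) (l : ℝ), 0 < l →
      ‖(l ^ α / (l ^ (2*α) + 2 * l ^ α * Real.cos (π*α) + 1)) • R l x‖ ≤
        (2*M*‖x‖) * (if l ≤ 1 then l ^ (α-1) else l ^ (-α-1)) := by
    intro α hα1 hα2 x l hl
    obtain ⟨h0, h1, h2⟩ := hcoef α hα1 hα2 l hl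
    have hx : 0 < l ^ α := Real.rpow_pos_of_pos hl α
    have hRl := hRle l hl x
    have hRnn : 0 ≤ ‖R l x‖ := norm_nonneg _
    rw [norm_smul, Real.norm_eq_abs, abs_of_nonneg h0]
    by_cases hl1 : l ≤ 1
    · rw [if_pos hl1]
      calc _ ≤ (2 * l ^ α) * (M * ‖x‖ / l) := mul_le_mul h1 hRl hRnn (by positivity)
        _ = (2*M*‖x‖) * l ^ (α-1) := by
            rw [Real.rpow_sub hl, Real.rpow_one]; field_simp
    · rw [if_neg hl1]
      calc _ ≤ (2 / l ^ α) * (M * ‖x‖ / l) := mul_le_mul h2 hRl hRnn (by positivity)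
        _ = (2*M*‖x‖) * l ^ (-α-1) := by
            rw [show -α-1 = -(α+1) by ring, Real.rpow_neg hl.le, Real.rpow_add hl,
              Real.rpow_one]
            field_simp
  -- continuity of the integrand in l
  have hcont : ∀ α : ℝ, 1/2 ≤ α → α ≤ 3/4 → ∀ x : X,
      ContinuousOn
        (fun l : ℝ => (l ^ α / (l ^ (2*α) + 2 * l ^ α * Real.cos (π*α) + 1)) • R l x)
        (Set.Ioi 0) := by
    intro α hα1 hα2 x
    refine ContinuousOn.smul ?_ (hRcont x)
    intro l hl
    have hl' : (0:ℝ) < l := hl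
    have hd := (hden α hα1 hα2 l hl').1
    apply ContinuousAt.continuousWithinAt
    refine ContinuousAt.div ?_ ?_ (by linarith)
    · exact Real.continuousAt_rpow_const l α (Or.inl (ne_of_gt hl'))
    · refine ContinuousAt.add (ContinuousAt.add ?_ ?_) continuousAt_const
      · exact Real.continuousAt_rpow_const l (2*α) (Or.inl (ne_of_gt hl'))
      · exact (continuousAt_const.mul
          (Real.continuousAt_rpow_const l α (Or.inl (ne_of_gt hl')))).mul continuousAt_const
  -- Part 1 : integrability
  have part1 : ∀ α ∈ Set.Icc (1/2:ℝ) (3/4), ∀ x : X,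
      IntegrableOn
        (fun l : ℝ => (l ^ α / (l ^ (2*α) + 2 * l ^ α * Real.cos (π*α) + 1)) • R l x)
        (Set.Ioi 0) := by
    intro α hα x
    refine Integrable.mono'
      (pw_rpow_integrable (2*M*‖x‖) (α-1) (-α-1) (by linarith [hα.1]) (by linarith [hα.1]))
      ((hcont α hα.1 hα.2 x).aestronglyMeasurable measurableSet_Ioi) ?_
    rw [ae_restrict_iff' measurableSet_Ioi]
    exact ae_of_all _ fun l hl => hFbd α hα.1 hα.2 x l hl
  refine ⟨part1, ?_⟩
  -- Part 2 : convergence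
  have hRAψ : ∀ l : ℝ, 0 < l → ‖R l (A ψ)‖ ≤ (1+M) * ‖ψ‖ := by
    intro l hl
    have h2 : R l (A ψ) + l • R l ψ = ψ := by
      have h := hRA l hl ψ hψ
      rwa [map_add, ContinuousLinearMap.map_smul] at h
    rw [eq_sub_of_add_eq h2]
    calc ‖ψ - l • R l ψ‖ ≤ ‖ψ‖ + ‖l • R l ψ‖ := norm_sub_le _ _
      _ ≤ ‖ψ‖ + M * ‖ψ‖ := by linarith [hRnorm l hl ψ]
      _ = (1+M) * ‖ψ‖ := by ring
  -- uniform bound for α ∈ (1/2, 3/4]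
  have hbd2 : ∀ α : ℝ, 1/2 ≤ α → α ≤ 3/4 → ∀ l : ℝ, 0 < l →
      ‖(l ^ α / (l ^ (2*α) + 2 * l ^ α * Real.cos (π*α) + 1)) • R l (A ψ)‖ ≤
        (2 * (1+M) * (‖A ψ‖ + ‖ψ‖)) * (if l ≤ 1 then l ^ ((1:ℝ)/2) else l ^ (-(3:ℝ)/2)) := by
    intro α hα1 hα2 l hl
    obtain ⟨h0, h1, h2⟩ := hcoef α hα1 hα2 l hl
    have hx : 0 < l ^ α := Real.rpow_pos_of_pos hl α
    have hx2 : 0 < l ^ ((1:ℝ)/2) := Real.rpow_pos_of_pos hl _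
    rw [norm_smul, Real.norm_eq_abs, abs_of_nonneg h0]
    by_cases hl1 : l ≤ 1
    · rw [if_pos hl1]
      have hr : l ^ α ≤ l ^ ((1:ℝ)/2) :=
        Real.rpow_le_rpow_of_exponent_ge hl hl1 (by linarith)
      calc _ ≤ (2 * l ^ α) * ((1+M) * ‖ψ‖) :=
            mul_le_mul h1 (hRAψ l hl) (norm_nonneg _) (by positivity)
        _ ≤ (2 * l ^ ((1:ℝ)/2)) * ((1+M) * (‖A ψ‖ + ‖ψ‖)) := by
            have hψle : ‖ψ‖ ≤ ‖A ψ‖ + ‖ψ‖ := le_add_of_nonneg_left (norm_nonneg _)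
            gcongr
        _ = (2 * (1+M) * (‖A ψ‖ + ‖ψ‖)) * l ^ ((1:ℝ)/2) := by ring
    · push_neg at hl1
      rw [if_neg (not_le.mpr hl1)]
      have hr : l ^ ((1:ℝ)/2) ≤ l ^ α :=
        Real.rpow_le_rpow_of_exponent_le hl1.le (by linarith)
      have hlid : l ^ (-(3:ℝ)/2) = (l ^ ((1:ℝ)/2) * l)⁻¹ := by
        rw [show (-(3:ℝ)/2) = -((1:ℝ)/2 + 1) by norm_num, Real.rpow_neg hl.le,
          Real.rpow_add hl, Real.rpow_one]
      calc _ ≤ (2 / l ^ α) * (M * ‖A ψ‖ / l) :=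
            mul_le_mul h2 (hRle l hl (A ψ)) (norm_nonneg _) (by positivity)
        _ ≤ (2 / l ^ ((1:ℝ)/2)) * (M * ‖A ψ‖ / l) := by gcongr
        _ = (2 * M * ‖A ψ‖) * (l ^ ((1:ℝ)/2) * l)⁻¹ := by field_simp
        _ ≤ (2 * (1+M) * (‖A ψ‖ + ‖ψ‖)) * (l ^ ((1:ℝ)/2) * l)⁻¹ := by
            refine mul_le_mul_of_nonneg_right ?_ (by positivity)
            nlinarith [norm_nonneg (A ψ), norm_nonneg ψ]
        _ = (2 * (1+M) * (‖A ψ‖ + ‖ψ‖)) * l ^ (-(3:ℝ)/2) := by rw [hlid]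
  have hbInt : Integrable
      (fun l : ℝ => (2 * (1+M) * (‖A ψ‖ + ‖ψ‖)) * (if l ≤ 1 then l ^ ((1:ℝ)/2) else l ^ (-(3:ℝ)/2)))
      (volume.restrict (Set.Ioi 0)) :=
    pw_rpow_integrable _ _ _ (by norm_num) (by norm_num)
  have hIoc : Set.Ioc (1/2:ℝ) (3/4) ∈ 𝓝[>] (1/2:ℝ) :=
    Ioc_mem_nhdsGT_of_mem ⟨le_refl _, by norm_num⟩
  -- dominated convergence
  have hmain : Tendsto
      (fun α : ℝ => ∫ l in Set.Ioi (0:ℝ),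
        (l ^ α / (l ^ (2 * α) + 2 * l ^ α * Real.cos (π * α) + 1)) • R l (A ψ))
      (𝓝[>] (1/2:ℝ))
      (𝓝 (∫ l in Set.Ioi (0:ℝ),
        (l ^ (1/2 : ℝ) /
          (l ^ (2 * (1/2 : ℝ)) + 2 * l ^ (1/2 : ℝ) * Real.cos (π * (1/2 : ℝ)) + 1)) •
          R l (A ψ))) := by
    refine MeasureTheory.tendsto_integral_filter_of_dominated_convergence
      (fun l : ℝ => (2 * (1+M) * (‖A ψ‖ + ‖ψ‖)) * (if l ≤ 1 then l ^ ((1:ℝ)/2) else l ^ (-(3:ℝ)/2)))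
      ?_ ?_ hbInt ?_
    · filter_upwards [hIoc] with α hα
      exact (hcont α hα.1.le hα.2 (A ψ)).aestronglyMeasurable measurableSet_Ioi
    · filter_upwards [hIoc] with α hα
      rw [ae_restrict_iff' measurableSet_Ioi]
      exact ae_of_all _ fun l hl => hbd2 α hα.1.le hα.2 l hl
    · rw [ae_restrict_iff' measurableSet_Ioi]
      refine ae_of_all _ fun l hl => ?_
      have hl' : (0:ℝ) < l := hl
      have hd := (hden (1/2) le_rfl (by norm_num) l hl').1
      have c1 : ContinuousAt (fun α : ℝ => l ^ α) ((1:ℝ)/2) :=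
        Real.continuousAt_const_rpow (ne_of_gt hl')
      have c2 : ContinuousAt (fun α : ℝ => l ^ (2*α)) ((1:ℝ)/2) :=
        (Real.continuousAt_const_rpow (ne_of_gt hl')).comp
          ((continuous_const.mul continuous_id).continuousAt)
      have c3 : ContinuousAt (fun α : ℝ => Real.cos (π*α)) ((1:ℝ)/2) :=
        (Real.continuous_cos.comp (continuous_const.mul continuous_id)).continuousAt
      have hca : ContinuousAt
          (fun α : ℝ => l ^ α / (l ^ (2*α) + 2 * l ^ α * Real.cos (π*α) + 1)) ((1:ℝ)/2) :=
        ContinuousAt.div c1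
          ((c2.add ((continuousAt_const.mul c1).mul c3)).add continuousAt_const)
          (by linarith)
      exact Tendsto.smul_const (hca.continuousWithinAt) (R l (A ψ))
  have hsin : Tendsto (fun α : ℝ => Real.sin (α * π) / π) (𝓝[>] (1/2:ℝ))
      (𝓝 (Real.sin ((1/2:ℝ) * π) / π)) :=
    (((Real.continuous_sin.comp (continuous_id.mul continuous_const)).div_const
      π).continuousAt).continuousWithinAt
  have hG := hsin.smul hmain
  intro ε hε
  by_cases hz : ‖A ψ‖ + ‖ψ‖ = 0
  · refine ⟨1, one_pos, fun α hα1 hα2 => ?_⟩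
    have h1 : ‖A ψ‖ = 0 := by
      have := norm_nonneg (A ψ); have := norm_nonneg ψ; linarith
    have hψn : ‖ψ‖ = 0 := by
      have := norm_nonneg (A ψ); have := norm_nonneg ψ; linarith
    have h2 : A ψ = 0 := norm_eq_zero.mp h1
    rw [h2]
    simp [hψn]
  · have hpos : 0 < ε * (‖A ψ‖ + ‖ψ‖) := by
      have h' : 0 < ‖A ψ‖ + ‖ψ‖ :=
        lt_of_le_of_ne (by positivity) (Ne.symm hz)
      positivity
    have h0 := tendsto_iff_norm_sub_tendsto_zero.mp hG
    have hev := Filter.Tendsto.eventually_lt_const hpos h0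
    rw [eventually_nhdsWithin_iff, Metric.eventually_nhds_iff] at hev
    obtain ⟨δ, hδ, hsub⟩ := hev
    refine ⟨δ, hδ, fun α h1 h2 => ?_⟩
    refine le_of_lt (hsub ?_ h1)
    rw [Real.dist_eq, abs_of_pos (by linarith)]
    linarith
end

section
/- Strong convergence of A^{−β} to the identity as β → 0⁺ (Lemma 7.1 of the paper): in the positive-operator resolvent setting, for every φ ∈ X the Bochner integral defining A^{−β}φ converges for all β ∈ (0,1), and: (i) for every ε > 0 there exists L ≥ 1 such that for all β ∈ (0,1/2]: ‖φ − A^{−β}φ‖_X ≤ sin(πβ) ( 2L(1+M)/π + M/L ) ‖φ‖_X + ε; (ii) consequently ‖φ − A^{−β}φ‖_X → 0 as β → 0⁺. -/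
open MeasureTheory Real Set Filter

lemma auxg_cont {β : ℝ} : ContinuousOn (fun l : ℝ => l ^ (-β) * (1 + l)⁻¹) (Ioi 0) := by
  apply ContinuousOn.mul
  · exact ContinuousOn.rpow_const continuous_id.continuousOn
      (fun x hx => Or.inl (ne_of_gt hx))
  · exact ContinuousOn.inv₀ (by fun_prop) (fun x hx => by
      have : (0:ℝ) < x := hx; positivity)

lemma auxg_integrable {β : ℝ} (hβ0 : 0 < β) (hβ1 : β < 1) :
    IntegrableOn (fun l : ℝ => l ^ (-β) * (1 + l)⁻¹) (Ioi 0) := by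
  have h1 : IntegrableOn (fun l : ℝ => l ^ (-β) * (1 + l)⁻¹) (Ioc 0 1) := by
    have hint : IntegrableOn (fun l : ℝ => l ^ (-β)) (Ioc 0 1) := by
      have := intervalIntegral.intervalIntegrable_rpow' (a := 0) (b := 1) (r := -β) (by linarith)
      rwa [intervalIntegrable_iff_integrableOn_Ioc_of_le (by norm_num)] at this
    refine hint.mono' ((auxg_cont.mono Ioc_subset_Ioi_self).aestronglyMeasurable
      measurableSet_Ioc) ?_
    refine (ae_restrict_iff' measurableSet_Ioc).mpr (ae_of_all _ fun l hl => ?_)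
    have hl0 : 0 < l := hl.1
    have h1 : (0:ℝ) ≤ l ^ (-β) := Real.rpow_nonneg hl0.le _
    have h2 : (0:ℝ) < (1 + l)⁻¹ := by positivity
    have h3 : (1 + l)⁻¹ ≤ 1 := (inv_le_one₀ (by linarith)).mpr (by linarith)
    rw [Real.norm_eq_abs, abs_of_nonneg (by positivity)]
    nlinarith
  have h2 : IntegrableOn (fun l : ℝ => l ^ (-β) * (1 + l)⁻¹) (Ioi 1) := by
    have hint : IntegrableOn (fun l : ℝ => l ^ (-β - 1)) (Ioi 1) :=
      integrableOn_Ioi_rpow_of_lt (by linarith) one_pos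
    refine hint.mono' ((auxg_cont.mono (Ioi_subset_Ioi (by norm_num))).aestronglyMeasurable
      measurableSet_Ioi) ?_
    refine (ae_restrict_iff' measurableSet_Ioi).mpr (ae_of_all _ fun l hl => ?_)
    have hl1 : (1:ℝ) < l := hl
    have hl0 : (0:ℝ) < l := by linarith
    have h1 : (0:ℝ) ≤ l ^ (-β) := Real.rpow_nonneg hl0.le _
    have h3 : (1 + l)⁻¹ ≤ l⁻¹ := by
      apply inv_anti₀ hl0; linarith
    have h4 : l ^ (-β - 1) = l ^ (-β) * l⁻¹ := by
      rw [Real.rpow_sub hl0, Real.rpow_one, div_eq_mul_inv]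
    rw [Real.norm_eq_abs, abs_of_nonneg (by positivity), h4]
    have h5 : (0:ℝ) ≤ (1+l)⁻¹ := by positivity
    nlinarith
  have := h1.union h2
  rwa [Ioc_union_Ioi_eq_Ioi (by norm_num : (0:ℝ) ≤ 1)] at this

lemma auxg_value {β : ℝ} (hβ0 : 0 < β) (hβ1 : β < 1) :
    ∫ l in Ioi (0:ℝ), l ^ (-β) * (1 + l)⁻¹ = π / Real.sin (π * β) := by
  set μ := volume.restrict (Ioi (0:ℝ)) with hμ
  set F : ℝ → ℝ → ℝ := fun l t => l ^ (-β) * Real.exp (-((1 + l) * t)) with hF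
  -- inner integral in t
  have hinner : ∀ l ∈ Ioi (0:ℝ), ∫ t, F l t ∂μ = l ^ (-β) * (1 + l)⁻¹ := by
    intro l hl
    have hl0 : (0:ℝ) < l := hl
    have h1l : (0:ℝ) < 1 + l := by linarith
    have := integral_rpow_mul_exp_neg_mul_Ioi (a := 1) (r := 1 + l) one_pos h1l
    simp only [sub_self, Real.rpow_zero, one_mul, Real.rpow_one, Real.Gamma_one, mul_one] at this
    rw [hF]
    simp only []
    rw [MeasureTheory.integral_const_mul]
    rw [hμ, this, one_div]
  -- integrable slices
  have hslice : ∀ l ∈ Ioi (0:ℝ), Integrable (F l) μ := by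
    intro l hl
    have hl0 : (0:ℝ) < l := hl
    exact ((exp_neg_integrableOn_Ioi 0 (by linarith : (0:ℝ) < 1 + l)).congr_fun
      (fun t _ => by ring_nf) measurableSet_Ioi).const_mul _
  -- measurability on the product
  have hmeasF : AEStronglyMeasurable (Function.uncurry F) (μ.prod μ) := by
    rw [hμ, Measure.prod_restrict]
    apply ContinuousOn.aestronglyMeasurable
    · apply ContinuousOn.mul
      · exact ContinuousOn.rpow_const continuous_fst.continuousOn
          (fun x hx => Or.inl (ne_of_gt hx.1))
      · exact (Real.continuous_exp.comp
          (((continuous_const.add continuous_fst).mul continuous_snd).neg)).continuousOn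
    · exact measurableSet_Ioi.prod measurableSet_Ioi
  -- integrability on the product
  have hprod : Integrable (Function.uncurry F) (μ.prod μ) := by
    rw [MeasureTheory.integrable_prod_iff hmeasF]
    constructor
    · exact (ae_restrict_iff' measurableSet_Ioi).mpr (ae_of_all _ hslice)
    · apply Integrable.congr (auxg_integrable hβ0 hβ1)
      refine (ae_restrict_iff' measurableSet_Ioi).mpr (ae_of_all _ fun l hl => ?_)
      have hl0 : (0:ℝ) < l := hl
      have : ∀ t ∈ Ioi (0:ℝ), ‖F l t‖ = F l t := by
        intro t _
        rw [Real.norm_eq_abs, abs_of_nonneg]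
        exact mul_nonneg (Real.rpow_nonneg hl0.le _) (Real.exp_nonneg _)
      have h' : (∫ y, ‖Function.uncurry F (l, y)‖ ∂μ) = ∫ t, F l t ∂μ := by
        rw [hμ]
        exact setIntegral_congr_fun measurableSet_Ioi (fun t ht => this t ht)
      have h'' := h'.trans (hinner l hl)
      simpa using h''.symm
  -- swap
  have hswap := MeasureTheory.integral_integral_swap (f := F) (μ := μ) (ν := μ) hprod
  have hLHS : ∫ l, ∫ t, F l t ∂μ ∂μ = ∫ l in Ioi (0:ℝ), l ^ (-β) * (1 + l)⁻¹ := by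
    rw [hμ]
    exact setIntegral_congr_fun measurableSet_Ioi (fun l hl => hinner l hl)
  -- other side
  have hRHS : ∫ t, ∫ l, F l t ∂μ ∂μ = π / Real.sin (π * β) := by
    have hinner2 : ∀ t ∈ Ioi (0:ℝ), ∫ l, F l t ∂μ
        = Real.Gamma (1 - β) * (Real.exp (-t) * t ^ (β - 1)) := by
      intro t ht
      have ht0 : (0:ℝ) < t := ht
      have heq : ∀ l ∈ Ioi (0:ℝ), F l t = Real.exp (-t) * (l ^ ((1 - β) - 1) * Real.exp (-(t * l))) := by
        intro l hl
        rw [hF]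
        simp only []
        rw [show ((1:ℝ) - β) - 1 = -β by ring, show -((1 + l) * t) = -t + -(t * l) by ring,
          Real.exp_add]
        ring
      rw [hμ, setIntegral_congr_fun measurableSet_Ioi heq, MeasureTheory.integral_const_mul,
        integral_rpow_mul_exp_neg_mul_Ioi (by linarith) ht0]
      rw [one_div, ← Real.rpow_neg_one t, ← Real.rpow_mul ht0.le,
        show (-1:ℝ) * (1 - β) = β - 1 by ring]
      ring
    rw [hμ, setIntegral_congr_fun measurableSet_Ioi hinner2, MeasureTheory.integral_const_mul]
    have hG : ∫ t in Ioi (0:ℝ), Real.exp (-t) * t ^ (β - 1) = Real.Gamma β :=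
      (Real.Gamma_eq_integral hβ0).symm
    rw [hG, mul_comm, Real.Gamma_mul_Gamma_one_sub]
  rw [← hLHS, hswap, hRHS]

set_option maxHeartbeats 1000000 in
/-- **Strong convergence of `A^{-β}` to the identity as `β → 0⁺` (Lemma 7.1).**
Positive-operator resolvent setting: `D` dense, and the resolvents satisfy both
`‖λR(λ)‖ ≤ M` and `‖R(λ)‖ ≤ M/(1+λ)`. Then for every `φ ∈ X` the Bochner integral
defining the Balakrishnan power `A^{-β}φ = (sin(πβ)/π)∫₀^∞ λ^{-β} R(λ)φ dλ` converges
for all `β ∈ (0,1)`; (i) for every `ε > 0` there is `L ≥ 1` with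
`‖φ - A^{-β}φ‖ ≤ sin(πβ)(2L(1+M)/π + M/L)‖φ‖ + ε` for all `β ∈ (0,1/2]`;
(ii) consequently `‖φ - A^{-β}φ‖ → 0` as `β → 0⁺`. -/
theorem negative_powers_tend_to_identity
    {X : Type*} [NormedAddCommGroup X] [NormedSpace ℝ X] [CompleteSpace X]
    (D : Submodule ℝ X) (hD : Dense (D : Set X)) (A : X → X)
    (hAlin : ∀ x ∈ D, ∀ y ∈ D, ∀ a b : ℝ, A (a • x + b • y) = a • A x + b • A y)
    (M : ℝ) (hM : 1 ≤ M)
    (R : ℝ → X →L[ℝ] X)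
    (hRmem : ∀ l : ℝ, 0 < l → ∀ φ : X, R l φ ∈ D)
    (hAR : ∀ l : ℝ, 0 < l → ∀ φ : X, A (R l φ) + l • R l φ = φ)
    (hRA : ∀ l : ℝ, 0 < l → ∀ ψ ∈ D, R l (A ψ + l • ψ) = ψ)
    (hRnorm : ∀ l : ℝ, 0 < l → ∀ φ : X, ‖l • R l φ‖ ≤ M * ‖φ‖)
    (hRnorm' : ∀ l : ℝ, 0 < l → ∀ φ : X, ‖R l φ‖ ≤ (M / (1 + l)) * ‖φ‖)
    (φ : X) :
    (∀ β ∈ Set.Ioo (0:ℝ) 1,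
        IntegrableOn (fun l : ℝ => l ^ (-β) • R l φ) (Set.Ioi 0)) ∧
    (∀ ε > (0:ℝ), ∃ L : ℝ, 1 ≤ L ∧ ∀ β ∈ Set.Ioc (0:ℝ) (1/2),
        ‖φ - (Real.sin (π * β) / π) • (∫ l in Set.Ioi (0:ℝ), l ^ (-β) • R l φ)‖ ≤
          Real.sin (π * β) * (2 * L * (1 + M) / π + M / L) * ‖φ‖ + ε) ∧
    Tendsto
      (fun β : ℝ => ‖φ - (Real.sin (π * β) / π) • (∫ l in Set.Ioi (0:ℝ), l ^ (-β) • R l φ)‖)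
      (nhdsWithin 0 (Set.Ioi 0)) (nhds 0) := by
  have hM0 : (0:ℝ) < M := lt_of_lt_of_le one_pos hM
  -- continuity of the resolvent applied to φ
  have hRcont : ContinuousOn (fun l : ℝ => R l φ) (Ioi 0) := by
    have hlip : ∀ l ∈ Ioi (0:ℝ), ∀ m ∈ Ioi (0:ℝ),
        dist (R l φ) (R m φ) ≤ (M * (M * ‖φ‖)) * dist l m := by
      intro l hl m hm
      have hl0 : (0:ℝ) < l := hl
      have hm0 : (0:ℝ) < m := hm
      have hx := hRA l hl0 (R m φ) (hRmem m hm0 φ)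
      have hAm : A (R m φ) = φ - m • R m φ := eq_sub_of_add_eq (hAR m hm0 φ)
      rw [hAm] at hx
      simp only [map_add, map_sub, _root_.map_smul] at hx
      have hkey : R l φ - R m φ = (m - l) • R l (R m φ) := by
        have h6 : (m - l) • R l (R m φ)
            = R l φ - (R l φ - m • R l (R m φ) + l • R l (R m φ)) := by
          rw [sub_smul]; abel
        rw [h6, hx]
      rw [dist_eq_norm, dist_eq_norm, hkey, norm_smul, Real.norm_eq_abs,
        Real.norm_eq_abs, abs_sub_comm m l]
      have hb : ‖R l (R m φ)‖ ≤ M * (M * ‖φ‖) := by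
        calc ‖R l (R m φ)‖ ≤ (M / (1 + l)) * ‖R m φ‖ := hRnorm' l hl0 _
          _ ≤ M * (M * ‖φ‖) := by
              have h1 : M / (1 + l) ≤ M := div_le_self hM0.le (by linarith)
              have h2 : ‖R m φ‖ ≤ (M / (1 + m)) * ‖φ‖ := hRnorm' m hm0 φ
              have h3 : (M / (1 + m)) * ‖φ‖ ≤ M * ‖φ‖ :=
                mul_le_mul_of_nonneg_right (div_le_self hM0.le (by linarith)) (norm_nonneg _)
              have h4 : (0:ℝ) ≤ M / (1 + l) := by positivity
              nlinarith [norm_nonneg (R m φ)]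
      have hb' : ‖R l (R m φ)‖ ≤ M * (M * ‖φ‖) := hb
      rw [mul_comm (M * (M * ‖φ‖))]
      exact mul_le_mul_of_nonneg_left hb' (abs_nonneg _)
    exact (LipschitzOnWith.of_dist_le' (K := M * (M * ‖φ‖))
      (fun x hx y hy => hlip x hx y hy)).continuousOn
  -- integrability of the integrand
  have hInt : ∀ β ∈ Set.Ioo (0:ℝ) 1,
      IntegrableOn (fun l : ℝ => l ^ (-β) • R l φ) (Set.Ioi 0) := by
    rintro β ⟨hβ0, hβ1⟩
    have hcont : ContinuousOn (fun l : ℝ => l ^ (-β) • R l φ) (Ioi 0) :=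
      (ContinuousOn.rpow_const continuous_id.continuousOn
        (fun x hx => Or.inl (ne_of_gt hx))).smul hRcont
    refine ((auxg_integrable hβ0 hβ1).const_mul (M * ‖φ‖)).mono'
      (hcont.aestronglyMeasurable measurableSet_Ioi) ?_
    refine (ae_restrict_iff' measurableSet_Ioi).mpr (ae_of_all _ fun l hl => ?_)
    have hl0 : (0:ℝ) < l := hl
    have h1 : (0:ℝ) ≤ l ^ (-β) := Real.rpow_nonneg hl0.le _
    rw [norm_smul, Real.norm_eq_abs, abs_of_nonneg h1]
    have h2 : ‖R l φ‖ ≤ (M / (1 + l)) * ‖φ‖ := hRnorm' l hl0 φ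
    have h3 : M / (1 + l) = M * (1 + l)⁻¹ := div_eq_mul_inv _ _
    calc l ^ (-β) * ‖R l φ‖ ≤ l ^ (-β) * ((M / (1 + l)) * ‖φ‖) :=
          mul_le_mul_of_nonneg_left h2 h1
      _ = M * ‖φ‖ * (l ^ (-β) * (1 + l)⁻¹) := by rw [h3]; ring
  -- uniform approximation of the identity by l • R l
  have happrox : ∀ ε > (0:ℝ), ∃ L : ℝ, 1 ≤ L ∧ ∀ l : ℝ, L ≤ l → ‖φ - l • R l φ‖ ≤ ε := by
    intro ε hε
    obtain ⟨ψ, hψD, hψ⟩ := hD.exists_dist_lt φ (show (0:ℝ) < ε / (2 * (M + 1)) by positivity)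
    refine ⟨max 1 (2 * M * (‖A ψ‖ + 1) / ε), le_max_left _ _, fun l hl => ?_⟩
    have hl1 : (1:ℝ) ≤ l := le_trans (le_max_left _ _) hl
    have hl0 : (0:ℝ) < l := lt_of_lt_of_le one_pos hl1
    have h2 : 2 * M * (‖A ψ‖ + 1) / ε ≤ l := le_trans (le_max_right _ _) hl
    have hid := hRA l hl0 ψ hψD
    simp only [map_add, _root_.map_smul] at hid
    have hexp : φ - l • R l φ = ((φ - ψ) - l • R l (φ - ψ)) + R l (A ψ) := by
      have h6 : ((φ - ψ) - (l • R l φ - l • R l ψ)) + R l (A ψ)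
          = φ - l • R l φ + ((R l (A ψ) + l • R l ψ) - ψ) := by abel
      rw [map_sub, smul_sub, h6, hid, sub_self, add_zero]
    have hd : ‖φ - ψ‖ < ε / (2 * (M + 1)) := by rw [← dist_eq_norm]; exact hψ
    have hAψ : ‖R l (A ψ)‖ ≤ ε / 2 := by
      refine le_trans (hRnorm' l hl0 (A ψ)) ?_
      rw [div_mul_eq_mul_div, div_le_iff₀ (by linarith : (0:ℝ) < 1 + l)]
      have h2' : 2 * M * (‖A ψ‖ + 1) ≤ l * ε := (div_le_iff₀ hε).mp h2
      nlinarith [norm_nonneg (A ψ)]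
    have hsm : ‖l • R l (φ - ψ)‖ ≤ M * ‖φ - ψ‖ := hRnorm l hl0 (φ - ψ)
    calc ‖φ - l • R l φ‖ = ‖((φ - ψ) - l • R l (φ - ψ)) + R l (A ψ)‖ := by rw [hexp]
      _ ≤ ‖(φ - ψ) - l • R l (φ - ψ)‖ + ‖R l (A ψ)‖ := norm_add_le _ _
      _ ≤ (‖φ - ψ‖ + ‖l • R l (φ - ψ)‖) + ε / 2 := add_le_add (norm_sub_le _ _) hAψ
      _ ≤ ε := by
          have hd' : ‖φ - ψ‖ * (2 * (M + 1)) < ε := (lt_div_iff₀ (by positivity)).mp hd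
          nlinarith [norm_nonneg (φ - ψ), hsm]
  have hπ : (0:ℝ) < π := Real.pi_pos
  have hmainEx : ∀ ε > (0:ℝ), ∃ L : ℝ, 1 ≤ L ∧ ∀ β ∈ Set.Ioc (0:ℝ) (1/2),
      ‖φ - (Real.sin (π * β) / π) • (∫ l in Set.Ioi (0:ℝ), l ^ (-β) • R l φ)‖ ≤
        Real.sin (π * β) * (2 * L * (1 + M) / π + M / L) * ‖φ‖ + ε := by
    intro ε hε
    obtain ⟨L, hL1, hL⟩ := happrox ε hε
    have hL0 : (0:ℝ) < L := lt_of_lt_of_le one_pos hL1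
    refine ⟨L, hL1, ?_⟩
    rintro β ⟨hβ0, hbhalf⟩
    have hβ1 : β < 1 := lt_of_le_of_lt hbhalf (by norm_num)
    have hs : 0 < Real.sin (π * β) :=
      Real.sin_pos_of_pos_of_lt_pi (by positivity) (by nlinarith)
    set s := Real.sin (π * β) with hsdef
    set g : ℝ → ℝ := fun l => l ^ (-β) * (1 + l)⁻¹ with hg
    set f : ℝ → X := fun l => l ^ (-β) • R l φ with hf
    set h : ℝ → X := fun l => g l • φ - f l with hh
    have hgint := auxg_integrable hβ0 hβ1
    have hgval : ∫ l in Ioi (0:ℝ), g l = π / s := auxg_value hβ0 hβ1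
    have hfint : IntegrableOn f (Ioi 0) := hInt β ⟨hβ0, hβ1⟩
    have hhint : IntegrableOn h (Ioi 0) := (hgint.smul_const φ).sub hfint
    have hform : ∀ l : ℝ, 0 < l → h l = l ^ (-β) • ((1 + l)⁻¹ • φ - R l φ) := by
      intro l hl
      simp only [hh, hg, hf]
      rw [smul_sub, mul_smul]
    have hkey : φ - (s / π) • (∫ l in Ioi (0:ℝ), f l) = (s / π) • (∫ l in Ioi (0:ℝ), h l) := by
      have h1 : ∫ l in Ioi (0:ℝ), h l = (π / s) • φ - ∫ l in Ioi (0:ℝ), f l := by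
        simp only [hh]
        rw [integral_sub (hgint.smul_const φ) hfint, integral_smul_const, hgval]
      rw [h1, smul_sub, smul_smul]
      have h2 : s / π * (π / s) = 1 := by field_simp
      rw [h2, one_smul]
    rw [hkey, norm_smul, Real.norm_eq_abs, abs_of_nonneg (by positivity : (0:ℝ) ≤ s / π)]
    have hsplit : ∫ l in Ioi (0:ℝ), h l = (∫ l in Ioc (0:ℝ) L, h l) + ∫ l in Ioi L, h l := by
      rw [← setIntegral_union (Ioc_disjoint_Ioi le_rfl) measurableSet_Ioi
        (hhint.mono_set Ioc_subset_Ioi_self) (hhint.mono_set (Ioi_subset_Ioi hL0.le)),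
        Ioc_union_Ioi_eq_Ioi hL0.le]
    -- bound on (0, L]
    have hB1 : ‖∫ l in Ioc (0:ℝ) L, h l‖ ≤ (1 + M) * ‖φ‖ * (2 * L) := by
      have hb : ∀ᵐ l ∂(volume.restrict (Ioc (0:ℝ) L)), ‖h l‖ ≤ (1 + M) * ‖φ‖ * l ^ (-β) := by
        refine (ae_restrict_iff' measurableSet_Ioc).mpr (ae_of_all _ fun l hl => ?_)
        have hl0 : 0 < l := hl.1
        rw [hform l hl0, norm_smul, Real.norm_eq_abs, abs_of_nonneg (Real.rpow_nonneg hl0.le _)]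
        have h1 : ‖(1 + l)⁻¹ • φ - R l φ‖ ≤ (1 + M) * ‖φ‖ := by
          refine (norm_sub_le _ _).trans ?_
          rw [norm_smul, Real.norm_eq_abs, abs_of_nonneg (by positivity : (0:ℝ) ≤ (1 + l)⁻¹)]
          have h2 : (1 + l)⁻¹ ≤ 1 := (inv_le_one₀ (by linarith)).mpr (by linarith)
          have h3 := hRnorm' l hl0 φ
          have h4 : M / (1 + l) ≤ M := div_le_self hM0.le (by linarith)
          have h5 : (0:ℝ) ≤ (1 + l)⁻¹ := by positivity
          have h6 : (0:ℝ) ≤ M / (1 + l) := by positivity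
          nlinarith [norm_nonneg φ, norm_nonneg (R l φ)]
        calc l ^ (-β) * ‖(1 + l)⁻¹ • φ - R l φ‖ ≤ l ^ (-β) * ((1 + M) * ‖φ‖) :=
              mul_le_mul_of_nonneg_left h1 (Real.rpow_nonneg hl0.le _)
          _ = (1 + M) * ‖φ‖ * l ^ (-β) := by ring
      have hdom : IntegrableOn (fun l : ℝ => (1 + M) * ‖φ‖ * l ^ (-β)) (Ioc 0 L) := by
        have hiv := intervalIntegral.intervalIntegrable_rpow' (a := 0) (b := L) (r := -β)
          (by linarith)
        rw [intervalIntegrable_iff_integrableOn_Ioc_of_le hL0.le] at hiv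
        exact hiv.const_mul _
      refine (norm_integral_le_of_norm_le hdom hb).trans ?_
      rw [MeasureTheory.integral_const_mul]
      have hiv : ∫ l in Ioc (0:ℝ) L, l ^ (-β) = (L ^ (-β+1) - 0 ^ (-β+1)) / (-β+1) := by
        rw [← intervalIntegral.integral_of_le hL0.le,
          integral_rpow (Or.inl (by linarith : (-1:ℝ) < -β))]
      rw [hiv, Real.zero_rpow (by intro hc; nlinarith : -β+1 ≠ 0)]
      have h5 : L ^ (-β+1) ≤ L := by
        calc L ^ (-β+1) ≤ L ^ (1:ℝ) := Real.rpow_le_rpow_of_exponent_le hL1 (by linarith)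
          _ = L := Real.rpow_one L
      have h6 : (0:ℝ) < -β+1 := by linarith
      have h8 : (L ^ (-β+1) - 0) / (-β+1) ≤ 2 * L := by
        rw [sub_zero, div_le_iff₀ h6]
        nlinarith [Real.rpow_nonneg hL0.le (-β+1)]
      exact mul_le_mul_of_nonneg_left h8 (by positivity)
    -- bound on (L, ∞)
    have hgintL : IntegrableOn g (Ioi L) := hgint.mono_set (Ioi_subset_Ioi hL0.le)
    have hp2 : IntegrableOn (fun l : ℝ => l ^ (-(2:ℝ))) (Ioi L) :=
      integrableOn_Ioi_rpow_of_lt (by norm_num) hL0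
    have hB2 : ‖∫ l in Ioi L, h l‖ ≤ ε * (π / s) + M * ‖φ‖ * (1 / L) := by
      have hq_int : IntegrableOn (fun l : ℝ => ε * g l + M * ‖φ‖ * l ^ (-(2:ℝ))) (Ioi L) :=
        (hgintL.const_mul ε).add (hp2.const_mul (M * ‖φ‖))
      have hb : ∀ᵐ l ∂(volume.restrict (Ioi L)),
          ‖h l‖ ≤ ε * g l + M * ‖φ‖ * l ^ (-(2:ℝ)) := by
        refine (ae_restrict_iff' measurableSet_Ioi).mpr (ae_of_all _ fun l hl => ?_)
        have hlL : L < l := hl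
        have hl1 : (1:ℝ) ≤ l := hL1.trans hlL.le
        have hl0 : (0:ℝ) < l := by linarith
        have hdec : (1+l)⁻¹ • φ - R l φ = (1+l)⁻¹ • (φ - l • R l φ) - (1+l)⁻¹ • R l φ := by
          rw [smul_sub, smul_smul, sub_sub, ← add_smul,
            show (1+l)⁻¹ * l + (1+l)⁻¹ = 1 by field_simp; ring, one_smul]
        rw [hform l hl0, norm_smul, Real.norm_eq_abs,
          abs_of_nonneg (Real.rpow_nonneg hl0.le _), hdec]
        have h1 : ‖(1+l)⁻¹ • (φ - l • R l φ) - (1+l)⁻¹ • R l φ‖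
            ≤ (1+l)⁻¹ * ε + (1+l)⁻¹ * (M / (1+l) * ‖φ‖) := by
          refine (norm_sub_le _ _).trans (add_le_add ?_ ?_)
          · rw [norm_smul, Real.norm_eq_abs, abs_of_nonneg (by positivity : (0:ℝ) ≤ (1+l)⁻¹)]
            exact mul_le_mul_of_nonneg_left (hL l hlL.le) (by positivity)
          · rw [norm_smul, Real.norm_eq_abs, abs_of_nonneg (by positivity : (0:ℝ) ≤ (1+l)⁻¹)]
            exact mul_le_mul_of_nonneg_left (hRnorm' l hl0 φ) (by positivity)
        have ha : l ^ (-β) ≤ 1 := Real.rpow_le_one_of_one_le_of_nonpos hl1 (by linarith)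
        have ha0 : (0:ℝ) ≤ l ^ (-β) := Real.rpow_nonneg hl0.le _
        have hb2 : (1+l)⁻¹ ≤ l⁻¹ := by apply inv_anti₀ hl0; linarith
        have hb0 : (0:ℝ) ≤ (1+l)⁻¹ := by positivity
        have hc0 : (0:ℝ) ≤ l⁻¹ := by positivity
        have hl2 : l ^ (-(2:ℝ)) = l⁻¹ * l⁻¹ := by
          rw [show -(2:ℝ) = (-1) + (-1) by norm_num, Real.rpow_add hl0, Real.rpow_neg_one]
        calc l ^ (-β) * ‖(1+l)⁻¹ • (φ - l • R l φ) - (1+l)⁻¹ • R l φ‖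
            ≤ l ^ (-β) * ((1+l)⁻¹ * ε + (1+l)⁻¹ * (M / (1+l) * ‖φ‖)) :=
              mul_le_mul_of_nonneg_left h1 ha0
          _ ≤ ε * g l + M * ‖φ‖ * l ^ (-(2:ℝ)) := by
              simp only [hg]
              rw [hl2, mul_add]
              apply add_le_add
              · exact le_of_eq (by ring)
              · have hM1 : M / (1+l) ≤ M * l⁻¹ := by
                  rw [div_eq_mul_inv]
                  exact mul_le_mul_of_nonneg_left hb2 hM0.le
                calc l ^ (-β) * ((1+l)⁻¹ * (M / (1+l) * ‖φ‖))
                    ≤ 1 * ((1+l)⁻¹ * (M / (1+l) * ‖φ‖)) :=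
                      mul_le_mul_of_nonneg_right ha (by positivity)
                  _ = (1+l)⁻¹ * (M / (1+l) * ‖φ‖) := one_mul _
                  _ ≤ l⁻¹ * (M * l⁻¹ * ‖φ‖) :=
                      mul_le_mul hb2 (mul_le_mul_of_nonneg_right hM1 (norm_nonneg _))
                        (by positivity) hc0
                  _ = M * ‖φ‖ * (l⁻¹ * l⁻¹) := by ring
      refine (norm_integral_le_of_norm_le hq_int hb).trans ?_
      rw [integral_add (hgintL.const_mul ε) (hp2.const_mul (M * ‖φ‖)),
        MeasureTheory.integral_const_mul, MeasureTheory.integral_const_mul]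
      apply add_le_add
      · apply mul_le_mul_of_nonneg_left _ hε.le
        have hmono : ∫ l in Ioi L, g l ≤ ∫ l in Ioi (0:ℝ), g l := by
          apply setIntegral_mono_set hgint
          · refine (ae_restrict_iff' measurableSet_Ioi).mpr (ae_of_all _ fun l hl => ?_)
            have hl0 : (0:ℝ) < l := hl
            simp only [hg, Pi.zero_apply]
            exact mul_nonneg (Real.rpow_nonneg hl0.le _) (by positivity)
          · exact HasSubset.Subset.eventuallyLE (Ioi_subset_Ioi hL0.le)
        rw [hgval] at hmono; exact hmono
      · apply mul_le_mul_of_nonneg_left _ (by positivity)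
        rw [integral_Ioi_rpow_of_lt (by norm_num) hL0,
          show (-(2:ℝ)+1) = -1 by norm_num, Real.rpow_neg_one]
        rw [one_div]
        norm_num
    have hπ1 : (1:ℝ) ≤ π := by nlinarith [Real.pi_gt_three]
    calc s / π * ‖∫ l in Ioi (0:ℝ), h l‖
        ≤ s / π * ((1 + M) * ‖φ‖ * (2 * L) + (ε * (π / s) + M * ‖φ‖ * (1 / L))) := by
          apply mul_le_mul_of_nonneg_left _ (by positivity)
          rw [hsplit]
          exact (norm_add_le _ _).trans (add_le_add hB1 hB2)
      _ ≤ s * (2 * L * (1 + M) / π + M / L) * ‖φ‖ + ε := by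
          have e2 : s / π * (ε * (π / s)) = ε := by field_simp
          have e1 : s / π * ((1 + M) * ‖φ‖ * (2 * L)) = s * (2 * L * (1 + M) / π) * ‖φ‖ := by
            ring
          have i3 : s / π * (M * ‖φ‖ * (1 / L)) ≤ s * (M / L) * ‖φ‖ := by
            calc s / π * (M * ‖φ‖ * (1 / L)) ≤ s * (M * ‖φ‖ * (1 / L)) :=
                  mul_le_mul_of_nonneg_right (div_le_self hs.le hπ1)
                    (by positivity)
              _ = s * (M / L) * ‖φ‖ := by ring
          have er : s * (2 * L * (1 + M) / π + M / L) * ‖φ‖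
              = s * (2 * L * (1 + M) / π) * ‖φ‖ + s * (M / L) * ‖φ‖ := by ring
          have expand : s / π * ((1 + M) * ‖φ‖ * (2 * L) + (ε * (π / s) + M * ‖φ‖ * (1 / L)))
              = s / π * ((1 + M) * ‖φ‖ * (2 * L)) + (s / π * (ε * (π / s))
                + s / π * (M * ‖φ‖ * (1 / L))) := by ring
          rw [expand, e1, e2, er]
          linarith
  refine ⟨hInt, hmainEx, ?_⟩
  rw [Metric.tendsto_nhdsWithin_nhds]
  intro ε hε
  obtain ⟨L, hL1, hbound⟩ := hmainEx (ε/3) (by positivity)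
  have hL0 : (0:ℝ) < L := lt_of_lt_of_le one_pos hL1
  have hC0 : (0:ℝ) < 2*L*(1+M)/π + M/L :=
    add_pos (div_pos (by nlinarith) hπ) (div_pos hM0 hL0)
  set C := 2*L*(1+M)/π + M/L with hC
  clear_value C
  have hden : (0:ℝ) < 3*π*C*(‖φ‖+1) := by
    apply mul_pos (mul_pos (mul_pos (by norm_num : (0:ℝ) < 3) hπ) hC0)
    positivity
  refine ⟨min (1/2) (ε/(3*π*C*(‖φ‖+1))),
    lt_min (by norm_num) (div_pos (by linarith) hden), ?_⟩
  intro β hβ hd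
  have hβ0 : (0:ℝ) < β := hβ
  rw [Real.dist_eq, sub_zero, abs_of_pos hβ0] at hd
  have hbhalf : β ≤ 1/2 := le_of_lt (lt_of_lt_of_le hd (min_le_left _ _))
  have hβ2 : β ≤ ε/(3*π*C*(‖φ‖+1)) := le_of_lt (lt_of_lt_of_le hd (min_le_right _ _))
  have hkey := hbound β ⟨hβ0, hbhalf⟩
  rw [Real.dist_eq, sub_zero, abs_of_nonneg (norm_nonneg _)]
  have hsin : Real.sin (π*β) ≤ π*β := Real.sin_le (by positivity)
  have h1 : Real.sin (π*β) * C * ‖φ‖ ≤ π*β*(C*‖φ‖) := by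
    rw [mul_assoc]
    exact mul_le_mul_of_nonneg_right hsin (mul_nonneg hC0.le (norm_nonneg _))
  have h2 : π*β*(C*‖φ‖) ≤ ε/3 := by
    have hβ2' : β * (3*π*C*(‖φ‖+1)) ≤ ε := by
      rw [← le_div_iff₀ hden]; exact hβ2
    have e : β * (3*π*C*(‖φ‖+1)) = 3*(π*β*(C*‖φ‖)) + 3*π*β*C := by ring
    rw [e] at hβ2'
    have hnn : (0:ℝ) ≤ 3*π*β*C :=
      mul_nonneg (mul_nonneg (mul_nonneg (by norm_num) hπ.le) hβ0.le) hC0.le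
    linarith
  calc ‖φ - (Real.sin (π * β) / π) • ∫ l in Set.Ioi (0:ℝ), l ^ (-β) • R l φ‖
      ≤ Real.sin (π*β) * C * ‖φ‖ + ε/3 := hkey
    _ ≤ ε/3 + ε/3 := by linarith
    _ < ε := by linarith
end
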